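/- arXiv:2504.10951 — 2 statements merged into one kernel-verified Lean document; each statement's English description precedes it below -/
import Mathlib

section
/- (Particle separation.) Let (x^i)_{i=1}^N, (v^i)_{i=1}^{N−1} be a solution of the particle system on (0, t'). Then for every t ∈ (0, t') and every i ∈ {1, …, N−1}: v₀^i Δx₀^i ≤ v₀* Δx^i_t and Δx^i_t ≤ Δx₀^i + t (a_max − a_min), where Δx₀^i := x₀^{i+1} − x₀^i. In particular, if v₀^i > 0 then Δx^i_t ≥ (v₀^i / v₀*) Δx₀^i > 0. -/
open MeasureTheory Set Filter
open scoped ENNReal NNReal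
open scoped Topology

/-- The velocity field `a(v) = f(v)/v`, extended by `a(0) = f'(0)`. -/
noncomputable def aF (f : ℝ → ℝ) (v : ℝ) : ℝ :=
  if v = 0 then deriv f 0 else f v / v

/-- The particle velocity `V(v_l, v_r)`: the minimum of `a` over `[v_l, v_r]` if
`v_l ≤ v_r`, and the maximum of `a` over `[v_r, v_l]` if `v_r ≤ v_l`. -/
noncomputable def pV (f : ℝ → ℝ) (vl vr : ℝ) : ℝ :=
  if vl ≤ vr then sInf (aF f '' Set.Icc vl vr) else sSup (aF f '' Set.Icc vr vl)

/-- A solution of the particle system `ẋ^i = V(v^{i-1}, v^i)`,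
`v^i_t = v₀^i Δx₀^i / Δx^i_t` on the time interval `[0, t')`, with the conventions
`v⁰ ≡ 0`, `v^N ≡ 0`. -/
structure IsParticleSol (f : ℝ → ℝ) (N : ℕ) (x₀ v₀ : ℕ → ℝ) (t' : ℝ)
    (x v : ℕ → ℝ → ℝ) : Prop where
  init : ∀ i, 1 ≤ i → i ≤ N → x i 0 = x₀ i
  cont : ∀ i, 1 ≤ i → i ≤ N → ContinuousOn (x i) (Set.Ico 0 t')
  order : ∀ t ∈ Set.Ioo (0:ℝ) t', ∀ i, 1 ≤ i → i < N → x i t < x (i+1) t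
  vzero : ∀ t, v 0 t = 0
  vN : ∀ t, v N t = 0
  ode : ∀ i, 1 ≤ i → i ≤ N → ∀ t ∈ Set.Ioo (0:ℝ) t',
    HasDerivAt (x i) (pV f (v (i-1) t) (v i t)) t
  mass : ∀ i, 1 ≤ i → i < N → ∀ t ∈ Set.Ico (0:ℝ) t',
    v i t = v₀ i * (x₀ (i+1) - x₀ i) / (x (i+1) t - x i t)

/-- `v₀* = max_{1 ≤ i ≤ N-1} v₀^i`. -/
noncomputable def vstar (N : ℕ) (v₀ : ℕ → ℝ) : ℝ :=
  sSup {r | ∃ i, 1 ≤ i ∧ i ≤ N - 1 ∧ r = v₀ i}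

/-- `a_min = min_{v ∈ [0, v₀*]} a(v)`. -/
noncomputable def aMin (f : ℝ → ℝ) (N : ℕ) (v₀ : ℕ → ℝ) : ℝ :=
  sInf (aF f '' Set.Icc 0 (vstar N v₀))

/-- `a_max = max_{v ∈ [0, v₀*]} a(v)`. -/
noncomputable def aMax (f : ℝ → ℝ) (N : ℕ) (v₀ : ℕ → ℝ) : ℝ :=
  sSup (aF f '' Set.Icc 0 (vstar N v₀))

lemma aF_cont {f : ℝ → ℝ} (hf : Continuous f) (hf0 : f 0 = 0)
    (hfd : DifferentiableAt ℝ f 0) : Continuous (aF f) := by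
  rw [continuous_iff_continuousAt]
  intro v
  rcases eq_or_ne v 0 with rfl | hv
  · rw [← continuousWithinAt_compl_self]
    have h := hfd.hasDerivAt
    rw [hasDerivAt_iff_tendsto_slope] at h
    have heq : aF f 0 = deriv f 0 := by simp [aF]
    unfold ContinuousWithinAt
    rw [heq]
    refine Filter.Tendsto.congr' ?_ h
    filter_upwards [self_mem_nhdsWithin] with w hw
    simp only [Set.mem_compl_iff, Set.mem_singleton_iff] at hw
    simp [slope_def_field, aF, hw, hf0]
  · have h : ContinuousAt (fun w => f w / w) v := (hf.continuousAt).div continuousAt_id hv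
    refine h.congr ?_
    filter_upwards [isOpen_ne.mem_nhds hv] with w hw
    simp [aF, hw]

lemma pV_le_aF {f : ℝ → ℝ} (hc : Continuous (aF f)) {p q : ℝ} (h : p ≤ q) :
    pV f p q ≤ aF f q := by
  rw [pV, if_pos h]
  exact csInf_le (isCompact_Icc.image hc).bddBelow ⟨q, ⟨h, le_rfl⟩, rfl⟩

lemma aF_le_pV {f : ℝ → ℝ} (hc : Continuous (aF f)) {p q : ℝ} (h : q ≤ p) :
    aF f p ≤ pV f p q := by
  rw [pV]
  split_ifs with h'
  · have hpq : p = q := le_antisymm h' h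
    subst hpq
    simp
  · exact le_csSup (isCompact_Icc.image hc).bddAbove ⟨p, ⟨h, le_rfl⟩, rfl⟩

lemma pV_mem_Icc {f : ℝ → ℝ} (hc : Continuous (aF f)) {lo hi p q : ℝ}
    (hp : p ∈ Set.Icc lo hi) (hq : q ∈ Set.Icc lo hi) :
    pV f p q ∈ Set.Icc (sInf (aF f '' Set.Icc lo hi)) (sSup (aF f '' Set.Icc lo hi)) := by
  have key : ∀ u w : ℝ, u ∈ Set.Icc lo hi → w ∈ Set.Icc lo hi → u ≤ w →
      sInf (aF f '' Set.Icc lo hi) ≤ sInf (aF f '' Set.Icc u w) ∧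
      sSup (aF f '' Set.Icc u w) ≤ sSup (aF f '' Set.Icc lo hi) := by
    intro u w hu hw huw
    have hsub : Set.Icc u w ⊆ Set.Icc lo hi := Set.Icc_subset_Icc hu.1 hw.2
    have hne : (aF f '' Set.Icc u w).Nonempty := (Set.nonempty_Icc.2 huw).image _
    constructor
    · exact csInf_le_csInf (isCompact_Icc.image hc).bddBelow hne (Set.image_mono hsub)
    · exact csSup_le_csSup (isCompact_Icc.image hc).bddAbove hne (Set.image_mono hsub)
  have elem : ∀ u : ℝ, u ∈ Set.Icc lo hi →
      sInf (aF f '' Set.Icc lo hi) ≤ aF f u ∧ aF f u ≤ sSup (aF f '' Set.Icc lo hi) := by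
    intro u hu
    exact ⟨csInf_le (isCompact_Icc.image hc).bddBelow ⟨u, hu, rfl⟩,
      le_csSup (isCompact_Icc.image hc).bddAbove ⟨u, hu, rfl⟩⟩
  rw [pV]
  split_ifs with h
  · obtain ⟨h1, h2⟩ := key p q hp hq h
    refine ⟨h1, le_trans ?_ (elem p hp).2⟩
    exact csInf_le ((isCompact_Icc.image hc).bddBelow.mono
      (Set.image_mono (Set.Icc_subset_Icc hp.1 hq.2))) ⟨p, ⟨le_rfl, h⟩, rfl⟩
  · push_neg at h
    obtain ⟨h1, h2⟩ := key q p hq hp h.le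
    refine ⟨le_trans (elem q hq).1 ?_, h2⟩
    exact le_csSup ((isCompact_Icc.image hc).bddAbove.mono
      (Set.image_mono (Set.Icc_subset_Icc hq.1 hp.2))) ⟨q, ⟨le_rfl, h.le⟩, rfl⟩


/-- **Particle separation.** For a solution of the particle system on `(0, t')`,
`v₀^i Δx₀^i ≤ v₀* Δx^i_t` and `Δx^i_t ≤ Δx₀^i + t (a_max − a_min)`; in particular, if
`v₀^i > 0` then `Δx^i_t ≥ (v₀^i / v₀*) Δx₀^i > 0`. -/
theorem particle_separation (f : ℝ → ℝ) (K : ℝ≥0) (hf : LipschitzWith K f)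
    (hf0 : f 0 = 0) (hfd : DifferentiableAt ℝ f 0)
    (N : ℕ) (hN : 2 ≤ N) (x₀ v₀ : ℕ → ℝ)
    (hx₀ : ∀ i, 1 ≤ i → i < N → x₀ i < x₀ (i+1))
    (hv₀nn : ∀ i, 1 ≤ i → i < N → 0 ≤ v₀ i)
    (hv₀0 : v₀ 0 = 0) (hv₀N : v₀ N = 0)
    (t' : ℝ) (ht' : 0 < t') (x v : ℕ → ℝ → ℝ)
    (hsol : IsParticleSol f N x₀ v₀ t' x v) :
    ∀ t ∈ Set.Ioo (0:ℝ) t', ∀ i, 1 ≤ i → i < N →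
      v₀ i * (x₀ (i+1) - x₀ i) ≤ vstar N v₀ * (x (i+1) t - x i t) ∧
      x (i+1) t - x i t ≤ (x₀ (i+1) - x₀ i) + t * (aMax f N v₀ - aMin f N v₀) ∧
      (0 < v₀ i →
        v₀ i / vstar N v₀ * (x₀ (i+1) - x₀ i) ≤ x (i+1) t - x i t ∧
        0 < v₀ i / vstar N v₀ * (x₀ (i+1) - x₀ i)) := by
  obtain ⟨hsi, hsc, hso, hsv0, hsvN, hsode, hsmass⟩ := hsol
  have hac : Continuous (aF f) := aF_cont hf.continuous hf0 hfd
  set vs := vstar N v₀ with hvs_def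
  -- vstar facts
  have hSfin : {r | ∃ i, 1 ≤ i ∧ i ≤ N - 1 ∧ r = v₀ i}.Finite := by
    have : {r | ∃ i, 1 ≤ i ∧ i ≤ N - 1 ∧ r = v₀ i} = v₀ '' (Set.Icc 1 (N-1)) := by
      ext r
      simp only [Set.mem_image, Set.mem_Icc, Set.mem_setOf_eq]
      constructor
      · rintro ⟨j, h1, h2, rfl⟩; exact ⟨j, ⟨h1, h2⟩, rfl⟩
      · rintro ⟨j, ⟨h1, h2⟩, rfl⟩; exact ⟨j, h1, h2, rfl⟩
    rw [this]
    exact (Set.finite_Icc _ _).image _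
  have hle_vs : ∀ j, 1 ≤ j → j < N → v₀ j ≤ vs := by
    intro j h1 h2
    exact le_csSup hSfin.bddAbove ⟨j, h1, by omega, rfl⟩
  have hvs0 : 0 ≤ vs :=
    le_trans (hv₀nn 1 le_rfl (by omega)) (hle_vs 1 le_rfl (by omega))
  -- positive gaps
  have hΔpos : ∀ j, 1 ≤ j → j < N → ∀ s ∈ Set.Ico (0:ℝ) t', 0 < x (j+1) s - x j s := by
    intro j h1 h2 s hs
    rcases eq_or_lt_of_le hs.1 with h | h
    · rw [← h, hsi j h1 (by omega), hsi (j+1) (by omega) (by omega)]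
      exact sub_pos.2 (hx₀ j h1 h2)
    · exact sub_pos.2 (hso s ⟨h, hs.2⟩ j h1 h2)
  -- nonneg velocities
  have hvnn : ∀ j, j ≤ N → ∀ s ∈ Set.Ico (0:ℝ) t', 0 ≤ v j s := by
    intro j hj s hs
    rcases Nat.eq_zero_or_pos j with rfl | hj1
    · rw [hsv0]
    rcases eq_or_lt_of_le hj with hjN | hjN
    · rw [hjN, hsvN]
    · rw [hsmass j hj1 hjN s hs]
      exact div_nonneg (mul_nonneg (hv₀nn j hj1 hjN) (sub_pos.2 (hx₀ j hj1 hjN)).le)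
        (hΔpos j hj1 hjN s hs).le
  -- mass as product form
  have hw_eq : ∀ j, 1 ≤ j → j < N → ∀ s ∈ Set.Ico (0:ℝ) t',
      v j s = v₀ j * (x₀ (j+1) - x₀ j) * (x (j+1) s - x j s)⁻¹ := by
    intro j h1 h2 s hs
    rw [hsmass j h1 h2 s hs, div_eq_mul_inv]
  -- derivative of the gap
  have hΔder : ∀ j, 1 ≤ j → j < N → ∀ s ∈ Set.Ioo (0:ℝ) t',
      HasDerivAt (fun u => x (j+1) u - x j u)
        (pV f (v j s) (v (j+1) s) - pV f (v (j-1) s) (v j s)) s := by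
    intro j h1 h2 s hs
    have ha := hsode (j+1) (by omega) (by omega) s hs
    have hb := hsode j h1 (by omega) s hs
    have hab := ha.sub hb
    simp only [Nat.add_sub_cancel] at hab
    exact hab
  -- derivative of w j
  have hwder : ∀ j, 1 ≤ j → j < N → ∀ s ∈ Set.Ioo (0:ℝ) t',
      HasDerivAt (fun u => v₀ j * (x₀ (j+1) - x₀ j) * (x (j+1) u - x j u)⁻¹)
        (v₀ j * (x₀ (j+1) - x₀ j) *
          (-(pV f (v j s) (v (j+1) s) - pV f (v (j-1) s) (v j s)) /
            (x (j+1) s - x j s)^2)) s := by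
    intro j h1 h2 s hs
    exact ((hΔder j h1 h2 s hs).inv
      (hΔpos j h1 h2 s ⟨hs.1.le, hs.2⟩).ne').const_mul _
  -- velocities at time 0
  have hv0eq : ∀ j, 1 ≤ j → j < N → v j 0 = v₀ j := by
    intro j h1 h2
    rw [hsmass j h1 h2 0 ⟨le_rfl, ht'⟩, hsi j h1 (by omega), hsi (j+1) (by omega) (by omega),
      mul_div_assoc, div_self (sub_pos.2 (hx₀ j h1 h2)).ne', mul_one]
  -- MAXIMUM PRINCIPLE
  have hFne : (Finset.Icc 1 (N-1)).Nonempty := ⟨1, by rw [Finset.mem_Icc]; omega⟩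
  have hmemF : ∀ j, j ∈ Finset.Icc 1 (N-1) ↔ (1 ≤ j ∧ j < N) := by
    intro j; rw [Finset.mem_Icc]; omega
  set M : ℝ → ℝ := fun s => (Finset.Icc 1 (N-1)).sup' hFne (fun j => v j s) with hM
  have hMcont : ContinuousOn M (Set.Ico 0 t') := by
    apply ContinuousOn.finset_sup'_apply
    intro j hj
    rw [hmemF] at hj
    have hwc : ContinuousOn (fun s => v₀ j * (x₀ (j+1) - x₀ j) * (x (j+1) s - x j s)⁻¹)
        (Set.Ico 0 t') :=
      continuousOn_const.mul (((hsc (j+1) (by omega) (by omega)).sub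
        (hsc j hj.1 (by omega))).inv₀ (fun s hs => (hΔpos j hj.1 hj.2 s hs).ne'))
    exact hwc.congr (fun s hs => hw_eq j hj.1 hj.2 s hs)
  have hM0 : M 0 ≤ vs := by
    apply Finset.sup'_le
    intro j hj
    rw [hmemF] at hj
    rw [hv0eq j hj.1 hj.2]
    exact hle_vs j hj.1 hj.2
  have hvle : ∀ T ∈ Set.Ioo (0:ℝ) t', ∀ j, 1 ≤ j → j < N → v j T ≤ vs := by
    intro T hT
    have hstep : ∀ a ∈ Set.Ioo (0:ℝ) T, M T ≤ M a := by
      intro a ha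
      have hsubIcc : Set.Icc a T ⊆ Set.Ioo 0 t' :=
        fun s hs => ⟨lt_of_lt_of_le ha.1 hs.1, lt_of_le_of_lt hs.2 hT.2⟩
      refine image_le_of_liminf_slope_right_le_deriv_boundary
        (B := fun _ => M a) (B' := fun _ => 0)
        (hMcont.mono (fun s hs => ⟨(hsubIcc hs).1.le, (hsubIcc hs).2⟩)) le_rfl
        continuousOn_const (fun s _ => hasDerivWithinAt_const s _ (M a)) ?_ ⟨ha.2.le, le_rfl⟩
      intro s hs r hr
      have hsIoo : s ∈ Set.Ioo (0:ℝ) t' := hsubIcc ⟨hs.1, hs.2.le⟩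
      apply Filter.Eventually.frequently
      have hnbhd : Set.Ico (0:ℝ) t' ∈ 𝓝 s :=
        Filter.mem_of_superset (isOpen_Ioo.mem_nhds hsIoo) Set.Ioo_subset_Ico_self
      have hkey : ∀ j ∈ Finset.Icc 1 (N-1), ∀ᶠ z in 𝓝[>] s, v j z < M s + r * (z - s) := by
        intro j hj
        have hj' := (hmemF j).1 hj
        have hveq : ∀ᶠ z in 𝓝 s,
            v j z = v₀ j * (x₀ (j+1) - x₀ j) * (x (j+1) z - x j z)⁻¹ :=
          Filter.eventually_of_mem hnbhd (fun z hz => hw_eq j hj'.1 hj'.2 z hz)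
        have hle : v j s ≤ M s := Finset.le_sup' (fun j => v j s) hj
        have hder := hwder j hj'.1 hj'.2 s hsIoo
        rcases lt_or_eq_of_le hle with hlt | heq
        · -- continuity case
          have hwc : ContinuousAt
              (fun u => v₀ j * (x₀ (j+1) - x₀ j) * (x (j+1) u - x j u)⁻¹) s :=
            hder.continuousAt
          have hws : v₀ j * (x₀ (j+1) - x₀ j) * (x (j+1) s - x j s)⁻¹ < M s := by
            rw [← hw_eq j hj'.1 hj'.2 s ⟨hsIoo.1.le, hsIoo.2⟩]; exact hlt
          have hev : ∀ᶠ z in 𝓝 s,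
              v₀ j * (x₀ (j+1) - x₀ j) * (x (j+1) z - x j z)⁻¹ < M s :=
            hwc (Iio_mem_nhds hws)
          filter_upwards [(hev.and hveq).filter_mono nhdsWithin_le_nhds,
            self_mem_nhdsWithin] with z hz hz'
          rw [hz.2]
          have : (0:ℝ) < r * (z - s) := mul_pos hr (sub_pos.2 hz')
          linarith [hz.1]
        · -- maximum point case: derivative nonpositive
          have hub : ∀ k, k ≤ N → v k s ≤ v j s := by
            intro k hk
            rcases Nat.eq_zero_or_pos k with rfl | hk1
            · rw [hsv0]
              exact hvnn j (by omega) s ⟨hsIoo.1.le, hsIoo.2⟩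
            rcases eq_or_lt_of_le hk with hkN | hkN
            · rw [hkN, hsvN]
              exact hvnn j (by omega) s ⟨hsIoo.1.le, hsIoo.2⟩
            · have : v k s ≤ M s := Finset.le_sup' (fun j => v j s) ((hmemF k).2 ⟨hk1, hkN⟩)
              rw [← heq] at this
              exact this
          have hDnn : 0 ≤ pV f (v j s) (v (j+1) s) - pV f (v (j-1) s) (v j s) := by
            have h1 : v (j+1) s ≤ v j s := hub (j+1) (by omega)
            have h2 : v (j-1) s ≤ v j s := hub (j-1) (by omega)
            have ha1 := aF_le_pV hac h1
            have ha2 := pV_le_aF hac h2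
            linarith
          have hdnp : v₀ j * (x₀ (j+1) - x₀ j) *
              (-(pV f (v j s) (v (j+1) s) - pV f (v (j-1) s) (v j s)) /
                (x (j+1) s - x j s)^2) ≤ 0 := by
            apply mul_nonpos_of_nonneg_of_nonpos
            · exact mul_nonneg (hv₀nn j hj'.1 hj'.2) (sub_pos.2 (hx₀ j hj'.1 hj'.2)).le
            · apply div_nonpos_of_nonpos_of_nonneg
              · linarith
              · positivity
          rw [hasDerivAt_iff_tendsto_slope] at hder
          have hslope : ∀ᶠ z in 𝓝[>] s,
              slope (fun u => v₀ j * (x₀ (j+1) - x₀ j) * (x (j+1) u - x j u)⁻¹) s z < r := by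
            apply Filter.Eventually.filter_mono
              (nhdsWithin_mono s (fun z (hz : z ∈ Set.Ioi s) => (Set.mem_Ioi.mp hz).ne'))
            exact hder (Iio_mem_nhds (lt_of_le_of_lt hdnp hr))
          filter_upwards [hslope, hveq.filter_mono nhdsWithin_le_nhds,
            self_mem_nhdsWithin] with z h1 h2 h3
          rw [slope_def_field, div_lt_iff₀ (sub_pos.2 h3)] at h1
          rw [h2, ← heq]
          rw [← hw_eq j hj'.1 hj'.2 s ⟨hsIoo.1.le, hsIoo.2⟩] at h1
          linarith
      filter_upwards [(Filter.eventually_all_finset _).2 hkey, self_mem_nhdsWithin]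
        with z hz hz'
      have hMz : M z < M s + r * (z - s) :=
        (Finset.sup'_lt_iff hFne).2 (fun j hj => hz j hj)
      rw [slope_def_field, div_lt_iff₀ (sub_pos.2 hz')]
      linarith
    have hMT : M T ≤ M 0 := by
      have hne : (𝓝[Set.Ioo (0:ℝ) T] (0:ℝ)).NeBot := by
        rw [← mem_closure_iff_nhdsWithin_neBot, closure_Ioo (ne_of_lt hT.1)]
        exact ⟨le_rfl, hT.1.le⟩
      have htend : Filter.Tendsto M (𝓝[Set.Ioo (0:ℝ) T] (0:ℝ)) (𝓝 (M 0)) :=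
        (hMcont 0 ⟨le_rfl, ht'⟩).mono_left
          (nhdsWithin_mono _ (fun s hs => ⟨hs.1.le, hs.2.trans hT.2⟩))
      exact ge_of_tendsto htend
        (Filter.eventually_of_mem self_mem_nhdsWithin (fun a ha => hstep a ha))
    intro j h1 h2
    exact le_trans (Finset.le_sup' (fun j => v j T) ((hmemF j).2 ⟨h1, h2⟩))
      (hMT.trans hM0)
  -- velocities in [0, vs]
  have hmemIcc : ∀ k, k ≤ N → ∀ s ∈ Set.Ioo (0:ℝ) t', v k s ∈ Set.Icc 0 vs := by
    intro k hk s hs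
    rcases Nat.eq_zero_or_pos k with rfl | hk1
    · rw [hsv0]; exact ⟨le_rfl, hvs0⟩
    rcases eq_or_lt_of_le hk with hkN | hkN
    · rw [hkN, hsvN]; exact ⟨le_rfl, hvs0⟩
    · exact ⟨hvnn k (by omega) s ⟨hs.1.le, hs.2⟩, hvle s hs k hk1 hkN⟩
  -- MAIN CONCLUSIONS
  intro t ht i hi1 hiN
  have htIco : t ∈ Set.Ico (0:ℝ) t' := ⟨ht.1.le, ht.2⟩
  have hΔt : 0 < x (i+1) t - x i t := hΔpos i hi1 hiN t htIco
  have hc_eq : v₀ i * (x₀ (i+1) - x₀ i) = v i t * (x (i+1) t - x i t) := by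
    rw [hsmass i hi1 hiN t htIco, div_mul_cancel₀ _ hΔt.ne']
  have part1 : v₀ i * (x₀ (i+1) - x₀ i) ≤ vs * (x (i+1) t - x i t) := by
    rw [hc_eq]
    exact mul_le_mul_of_nonneg_right (hvle t ht i hi1 hiN) hΔt.le
  have part2 : x (i+1) t - x i t ≤ (x₀ (i+1) - x₀ i) + t * (aMax f N v₀ - aMin f N v₀) := by
    have hanti : AntitoneOn
        (fun s => x (i+1) s - x i s - s * (aMax f N v₀ - aMin f N v₀)) (Set.Icc 0 t) := by
      apply antitoneOn_of_deriv_nonpos (convex_Icc 0 t)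
      · refine ContinuousOn.sub ?_ ((continuous_id.mul continuous_const).continuousOn)
        exact (((hsc (i+1) (by omega) (by omega)).sub (hsc i hi1 (by omega))).mono
          (fun s hs => ⟨hs.1, lt_of_le_of_lt hs.2 ht.2⟩))
      · rw [interior_Icc]
        intro s hs
        have hsub : s ∈ Set.Ioo (0:ℝ) t' := ⟨hs.1, hs.2.trans ht.2⟩
        exact (((hΔder i hi1 hiN s hsub).sub
          ((hasDerivAt_id s).mul_const _)).differentiableAt).differentiableWithinAt
      · rw [interior_Icc]
        intro s hs
        have hsub : s ∈ Set.Ioo (0:ℝ) t' := ⟨hs.1, hs.2.trans ht.2⟩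
        have hD : HasDerivAt
            (fun u => x (i+1) u - x i u - u * (aMax f N v₀ - aMin f N v₀))
            ((pV f (v i s) (v (i+1) s) - pV f (v (i-1) s) (v i s)) -
              1 * (aMax f N v₀ - aMin f N v₀)) s :=
          (hΔder i hi1 hiN s hsub).sub ((hasDerivAt_id s).mul_const _)
        rw [hD.deriv]
        have h1 := pV_mem_Icc hac (hmemIcc i (by omega) s hsub) (hmemIcc (i+1) (by omega) s hsub)
        have h2 := pV_mem_Icc hac (hmemIcc (i-1) (by omega) s hsub) (hmemIcc i (by omega) s hsub)
        have e1 : aMin f N v₀ = sInf (aF f '' Set.Icc 0 vs) := rfl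
        have e2 : aMax f N v₀ = sSup (aF f '' Set.Icc 0 vs) := rfl
        rw [e1, e2]
        obtain ⟨h1a, h1b⟩ := h1
        obtain ⟨h2a, h2b⟩ := h2
        linarith
    have hineq := hanti (Set.mem_Icc.2 ⟨le_rfl, ht.1.le⟩) (Set.mem_Icc.2 ⟨ht.1.le, le_rfl⟩) ht.1.le
    simp only [zero_mul, sub_zero] at hineq
    rw [hsi i hi1 (by omega), hsi (i+1) (by omega) (by omega)] at hineq
    linarith
  refine ⟨part1, part2, fun hpos => ?_⟩
  have hvspos : 0 < vs := lt_of_lt_of_le hpos (hle_vs i hi1 hiN)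
  constructor
  · rw [div_mul_eq_mul_div, div_le_iff₀ hvspos]
    exact part1.trans_eq (mul_comm _ _)
  · exact mul_pos (div_pos hpos hvspos) (sub_pos.2 (hx₀ i hi1 hiN))
end

section
/- (Temporal L¹ modulus of continuity.) Let (x^i)_{i=1}^N, (v^i)_{i=1}^{N−1} be a solution of the particle system on (0, t'). Then for all s, t ∈ [0, t'): ∫_ℝ |v(x, t) − v(x, s)| dx ≤ 4 [f]_Lip (Σ_{i=0}^{N−1} |v₀^{i+1} − v₀^i|) |t − s|, where [f]_Lip denotes the Lipschitz constant of f. -/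
open MeasureTheory Set Filter
open scoped ENNReal NNReal

open scoped Topology

section aux
variable {f : ℝ → ℝ} {K : ℝ≥0}

lemma aF_abs_le (hf : LipschitzWith K f) (hf0 : f 0 = 0)
    (hfd : DifferentiableAt ℝ f 0) : ∀ z : ℝ, |aF f z| ≤ K := by
  intro z
  rcases eq_or_ne z 0 with rfl | hz
  · -- |deriv f 0| ≤ K
    have hd : HasDerivAt f (deriv f 0) 0 := hfd.hasDerivAt
    have hT : Tendsto (slope f 0) (𝓝[≠] 0) (𝓝 (deriv f 0)) :=
      hasDerivAt_iff_tendsto_slope.1 hd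
    have hT' : Tendsto (fun z => |slope f 0 z|) (𝓝[≠] 0) (𝓝 |deriv f 0|) :=
      hT.abs
    have hev : ∀ᶠ z in 𝓝[≠] (0:ℝ), |slope f 0 z| ≤ K := by
      filter_upwards [self_mem_nhdsWithin] with z hz
      have hzz : z ≠ 0 := hz
      have : |f z - f 0| ≤ K * |z - 0| := by
        have := hf.dist_le_mul z 0
        simpa [Real.dist_eq] using this
      rw [slope_def_field]
      rw [div_eq_mul_inv, abs_mul, abs_inv]
      calc |f z - f 0| * |z - 0|⁻¹ ≤ (K * |z - 0|) * |z - 0|⁻¹ := by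
            apply mul_le_mul_of_nonneg_right this (by positivity)
        _ = K := by
            field_simp
    have : |deriv f 0| ≤ K :=
      le_of_tendsto hT' hev
    simpa [aF] using this
  · have : |f z| ≤ K * |z| := by
      have := hf.dist_le_mul z 0
      simpa [Real.dist_eq, hf0] using this
    rw [aF, if_neg hz, abs_div]
    rw [div_le_iff₀ (by positivity)]
    linarith

lemma aF_contOn (hf : LipschitzWith K f) (hf0 : f 0 = 0)
    (hfd : DifferentiableAt ℝ f 0) {c d : ℝ} (hc : 0 ≤ c) :
    ContinuousOn (aF f) (Icc c d) := by
  intro z hz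
  rcases eq_or_ne z 0 with rfl | hz0
  · -- continuity within at 0 via slope
    have hd : HasDerivAt f (deriv f 0) 0 := hfd.hasDerivAt
    have hT : Tendsto (slope f 0) (𝓝[≠] 0) (𝓝 (deriv f 0)) :=
      hasDerivAt_iff_tendsto_slope.1 hd
    have hsub : 𝓝[Icc c d \ {0}] (0:ℝ) ≤ 𝓝[≠] 0 :=
      nhdsWithin_mono _ (by intro y hy; exact hy.2)
    have h1 : Tendsto (aF f) (𝓝[Icc c d \ {0}] 0) (𝓝 (aF f 0)) := by
      have h0 : Tendsto (slope f 0) (𝓝[Icc c d \ {0}] 0) (𝓝 (deriv f 0)) := hT.mono_left hsub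
      have heq : aF f =ᶠ[𝓝[Icc c d \ {0}] 0] slope f 0 := by
        filter_upwards [self_mem_nhdsWithin] with y hy
        have hy0 : y ≠ 0 := hy.2
        rw [aF, if_neg hy0, slope_def_field]
        simp [hf0]
      have : aF f 0 = deriv f 0 := by simp [aF]
      rw [this]
      exact h0.congr' heq.symm

    have : ContinuousWithinAt (aF f) (Icc c d \ {0}) 0 := h1
    have h2 : ContinuousWithinAt (aF f) (insert 0 (Icc c d \ {0})) 0 := continuousWithinAt_insert_self.2 this
    apply h2.mono
    intro y hy
    rcases eq_or_ne y 0 with rfl | hy0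
    · exact mem_insert _ _
    · exact mem_insert_of_mem _ ⟨hy, hy0⟩
  · -- continuous at z ≠ 0
    apply ContinuousAt.continuousWithinAt
    have hc : ContinuousAt (fun v => f v / v) z :=
      (hf.continuous.continuousAt).div continuousAt_id hz0
    apply hc.congr
    filter_upwards [isOpen_ne.mem_nhds hz0] with y hy
    rw [aF, if_neg hy]
end aux

lemma pV_rep (hf : LipschitzWith K f) (hf0 : f 0 = 0) (hfd : DifferentiableAt ℝ f 0)
    {u w : ℝ} (hu : 0 ≤ u) (hw : 0 ≤ w) :
    ∃ ξ ∈ uIcc u w, pV f u w = aF f ξ := by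
  rcases le_total u w with h | h
  · have hne : (Icc u w).Nonempty := ⟨u, by simp [h]⟩
    obtain ⟨ξ, hξ, hmin⟩ := isCompact_Icc.exists_isMinOn hne (aF_contOn hf hf0 hfd hu)
    refine ⟨ξ, by rw [uIcc_of_le h]; exact hξ, ?_⟩
    rw [pV, if_pos h]
    apply le_antisymm
    · exact csInf_le ⟨aF f ξ, fun z ⟨y, hy, hyz⟩ => hyz ▸ hmin hy⟩ ⟨ξ, hξ, rfl⟩
    · exact le_csInf (hne.image _) (fun z ⟨y, hy, hyz⟩ => hyz ▸ hmin hy)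
  · rcases eq_or_lt_of_le h with rfl | hlt
    · refine ⟨w, by simp, ?_⟩
      rw [pV, if_pos le_rfl, Icc_self, image_singleton, csInf_singleton]
    · have hne : (Icc w u).Nonempty := ⟨w, by simp [h]⟩
      obtain ⟨ξ, hξ, hmax⟩ := isCompact_Icc.exists_isMaxOn hne (aF_contOn hf hf0 hfd hw)
      refine ⟨ξ, by rw [uIcc_of_ge h]; exact hξ, ?_⟩
      rw [pV, if_neg (not_le.2 hlt)]
      apply le_antisymm
      · exact csSup_le (hne.image _) (fun z ⟨y, hy, hyz⟩ => hyz ▸ hmax hy)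
      · exact le_csSup ⟨aF f ξ, fun z ⟨y, hy, hyz⟩ => hyz ▸ hmax hy⟩ ⟨ξ, hξ, rfl⟩

lemma pV_abs_le (hf : LipschitzWith K f) (hf0 : f 0 = 0) (hfd : DifferentiableAt ℝ f 0)
    {u w : ℝ} (hu : 0 ≤ u) (hw : 0 ≤ w) : |pV f u w| ≤ K := by
  obtain ⟨ξ, _, hξ⟩ := pV_rep hf hf0 hfd hu hw
  rw [hξ]; exact aF_abs_le hf hf0 hfd ξ

lemma bddB (hf : LipschitzWith K f) (hf0 : f 0 = 0) (hfd : DifferentiableAt ℝ f 0)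
    (s : Set ℝ) : BddBelow (aF f '' s) ∧ BddAbove (aF f '' s) :=
  ⟨⟨-K, fun z ⟨y, _, hyz⟩ => hyz ▸ (neg_le_of_abs_le (aF_abs_le hf hf0 hfd y))⟩,
   ⟨K, fun z ⟨y, _, hyz⟩ => hyz ▸ (le_of_abs_le (aF_abs_le hf hf0 hfd y))⟩⟩

lemma pV_le_left (hf : LipschitzWith K f) (hf0 : f 0 = 0) (hfd : DifferentiableAt ℝ f 0)
    {u w : ℝ} (h : u ≤ w) : pV f u w ≤ aF f u := by
  rw [pV, if_pos h]
  exact csInf_le (bddB hf hf0 hfd _).1 ⟨u, by simp [h], rfl⟩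

lemma pV_le_right (hf : LipschitzWith K f) (hf0 : f 0 = 0) (hfd : DifferentiableAt ℝ f 0)
    {u w : ℝ} (h : u ≤ w) : pV f u w ≤ aF f w := by
  rw [pV, if_pos h]
  exact csInf_le (bddB hf hf0 hfd _).1 ⟨w, by simp [h], rfl⟩

lemma pV_ge_left (hf : LipschitzWith K f) (hf0 : f 0 = 0) (hfd : DifferentiableAt ℝ f 0)
    {u w : ℝ} (h : w ≤ u) : aF f u ≤ pV f u w := by
  rcases eq_or_lt_of_le h with rfl | hlt
  · rw [pV, if_pos le_rfl, Icc_self, image_singleton, csInf_singleton]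
  · rw [pV, if_neg (not_le.2 hlt)]
    exact le_csSup (bddB hf hf0 hfd _).2 ⟨u, by simp [h], rfl⟩

lemma pV_ge_right (hf : LipschitzWith K f) (hf0 : f 0 = 0) (hfd : DifferentiableAt ℝ f 0)
    {u w : ℝ} (h : w ≤ u) : aF f w ≤ pV f u w := by
  rcases eq_or_lt_of_le h with rfl | hlt
  · rw [pV, if_pos le_rfl, Icc_self, image_singleton, csInf_singleton]
  · rw [pV, if_neg (not_le.2 hlt)]
    exact le_csSup (bddB hf hf0 hfd _).2 ⟨w, by simp [h], rfl⟩

lemma aF_mul_sub_f (hf : LipschitzWith K f) (hf0 : f 0 = 0) (hfd : DifferentiableAt ℝ f 0)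
    (ξ u : ℝ) : |aF f ξ * u - f u| ≤ 2 * K * |u - ξ| := by
  have h1 : aF f ξ * ξ = f ξ := by
    rcases eq_or_ne ξ 0 with rfl | hξ
    · simp [hf0]
    · rw [aF, if_neg hξ]; field_simp
  have h2 : |f ξ - f u| ≤ K * |ξ - u| := by
    have := hf.dist_le_mul ξ u
    simpa [Real.dist_eq] using this
  have h3 : |aF f ξ| ≤ K := aF_abs_le hf hf0 hfd ξ
  calc |aF f ξ * u - f u| = |aF f ξ * (u - ξ) + (f ξ - f u)| := by rw [← h1]; ring_nf
    _ ≤ |aF f ξ * (u - ξ)| + |f ξ - f u| := abs_add_le _ _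
    _ ≤ K * |u - ξ| + K * |ξ - u| := by
        refine add_le_add ?_ h2
        rw [abs_mul]
        exact mul_le_mul_of_nonneg_right h3 (abs_nonneg _)
    _ = 2 * K * |u - ξ| := by rw [abs_sub_comm ξ u]; ring

lemma pV_key (hf : LipschitzWith K f) (hf0 : f 0 = 0) (hfd : DifferentiableAt ℝ f 0)
    {u w : ℝ} (hu : 0 ≤ u) (hw : 0 ≤ w) :
    |w - u| * |pV f u w| + |u * pV f u w - f u| + |w * pV f u w - f w|
      ≤ 3 * K * |w - u| := by
  obtain ⟨ξ, hξmem, hξ⟩ := pV_rep hf hf0 hfd hu hw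
  have hsum : |u - ξ| + |w - ξ| = |w - u| := by
    rw [Set.mem_uIcc] at hξmem
    rcases hξmem with ⟨h1, h2⟩ | ⟨h1, h2⟩
    · rw [abs_of_nonpos (by linarith : u - ξ ≤ 0), abs_of_nonneg (by linarith : (0:ℝ) ≤ w - ξ),
        abs_of_nonneg (by linarith : (0:ℝ) ≤ w - u)]; ring
    · rw [abs_of_nonneg (by linarith : (0:ℝ) ≤ u - ξ), abs_of_nonpos (by linarith : w - ξ ≤ 0),
        abs_of_nonpos (by linarith : w - u ≤ 0)]; ring
  have hb : |pV f u w| ≤ K := by rw [hξ]; exact aF_abs_le hf hf0 hfd ξ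
  have h1 : |u * pV f u w - f u| ≤ 2 * K * |u - ξ| := by
    rw [hξ, mul_comm]; exact aF_mul_sub_f hf hf0 hfd ξ u
  have h2 : |w * pV f u w - f w| ≤ 2 * K * |w - ξ| := by
    rw [hξ, mul_comm]; exact aF_mul_sub_f hf hf0 hfd ξ w
  have h0 : |w - u| * |pV f u w| ≤ |w - u| * K :=
    mul_le_mul_of_nonneg_left hb (abs_nonneg _)
  have hK : (0:ℝ) ≤ K := K.2
  nlinarith [abs_nonneg (w - u), abs_nonneg (u - ξ), abs_nonneg (w - ξ)]

lemma telescope_abs (u : ℕ → ℝ) : ∀ a b : ℕ, a ≤ b →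
    |u b - u a| ≤ ∑ i ∈ Finset.Ioc a b, |u i - u (i-1)| := by
  intro a b hab
  induction b, hab using Nat.le_induction with
  | base => simp
  | succ b hab ih =>
    have hstep : ∑ i ∈ Finset.Ioc a (b+1), |u i - u (i-1)|
        = (∑ i ∈ Finset.Ioc a b, |u i - u (i-1)|) + |u (b+1) - u (b+1-1)| :=
      Finset.sum_Ioc_succ_top hab _
    rw [hstep]
    calc |u (b+1) - u a| = |(u b - u a) + (u (b+1) - u b)| := by ring_nf
      _ ≤ |u b - u a| + |u (b+1) - u b| := abs_add_le _ _
      _ ≤ (∑ i ∈ Finset.Ioc a b, |u i - u (i-1)|) + |u (b+1) - u (b+1-1)| := by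
          simp only [Nat.add_sub_cancel]
          exact add_le_add ih le_rfl

lemma dini_bound {g : ℝ → ℝ} {a b C : ℝ} (hab : a ≤ b) (hg : ContinuousOn g (Icc a b))
    (hs : ∀ σ ∈ Ico a b, ∀ r, C < r → ∃ᶠ z in 𝓝[>] σ, slope g σ z < r) :
    g b ≤ g a + C * (b - a) := by
  have := image_le_of_liminf_slope_right_le_deriv_boundary (B := fun σ => g a + C * (σ - a))
    (B' := fun _ => C) hg (by simp)
    (by fun_prop)
    (fun x _ => by
      simpa using ((hasDerivAt_id x).sub_const a |>.const_mul C |>.const_add (g a)).hasDerivWithinAt (s := Ici x))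
    (fun x hx r hr => hs x hx r hr)
  exact this (right_mem_Icc.2 hab)

/-- step function representative of the approximate solution -/
noncomputable def Wfun (N : ℕ) (x v : ℕ → ℝ → ℝ) (σ : ℝ) (y : ℝ) : ℝ :=
  ∑ j ∈ Finset.Ioo 0 N, v j σ * Set.indicator (Set.Ioo (x j σ) (x (j+1) σ)) 1 y

section sol
variable {f : ℝ → ℝ} {K : ℝ≥0} {N : ℕ} {x₀ v₀ : ℕ → ℝ} {t' : ℝ} {x v : ℕ → ℝ → ℝ}

lemma xlt (hsol : IsParticleSol f N x₀ v₀ t' x v)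
    (hx₀ : ∀ i, 1 ≤ i → i < N → x₀ i < x₀ (i+1)) :
    ∀ σ ∈ Set.Ico (0:ℝ) t', ∀ i, 1 ≤ i → i < N → x i σ < x (i+1) σ := by
  rintro σ ⟨h0, h1⟩ i hi hiN
  rcases eq_or_lt_of_le h0 with rfl | hpos
  · rw [hsol.init i hi (le_of_lt hiN), hsol.init (i+1) (by omega) (by omega)]
    exact hx₀ i hi hiN
  · exact hsol.order σ ⟨hpos, h1⟩ i hi hiN

lemma xmono (hsol : IsParticleSol f N x₀ v₀ t' x v)
    (hx₀ : ∀ i, 1 ≤ i → i < N → x₀ i < x₀ (i+1)) :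
    ∀ σ ∈ Set.Ico (0:ℝ) t', ∀ i k, 1 ≤ i → i ≤ k → k ≤ N → x i σ ≤ x k σ := by
  intro σ hσ i k hi hik
  induction k, hik using Nat.le_induction with
  | base => intro _; exact le_rfl
  | succ k hik ih =>
    intro hkN
    exact (ih (by omega)).trans (le_of_lt (xlt hsol hx₀ σ hσ k (by omega) (by omega)))

lemma ellpos (hsol : IsParticleSol f N x₀ v₀ t' x v)
    (hx₀ : ∀ i, 1 ≤ i → i < N → x₀ i < x₀ (i+1)) :
    ∀ σ ∈ Set.Ico (0:ℝ) t', ∀ j, 1 ≤ j → j < N → 0 < x (j+1) σ - x j σ := by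
  intro σ hσ j h1 h2
  have := xlt hsol hx₀ σ hσ j h1 h2
  linarith

lemma vnn (hsol : IsParticleSol f N x₀ v₀ t' x v)
    (hx₀ : ∀ i, 1 ≤ i → i < N → x₀ i < x₀ (i+1))
    (hv₀nn : ∀ i, 1 ≤ i → i < N → 0 ≤ v₀ i) :
    ∀ σ ∈ Set.Ico (0:ℝ) t', ∀ j, j ≤ N → 0 ≤ v j σ := by
  intro σ hσ j hj
  rcases Nat.eq_zero_or_pos j with rfl | hj1
  · rw [hsol.vzero]
  rcases eq_or_lt_of_le hj with rfl | hjN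
  · rw [hsol.vN]
  rw [hsol.mass j hj1 hjN σ hσ]
  have h1 : 0 ≤ v₀ j * (x₀ (j+1) - x₀ j) := by
    have := hx₀ j hj1 hjN
    have := hv₀nn j hj1 hjN
    nlinarith
  exact div_nonneg h1 (le_of_lt (ellpos hsol hx₀ σ hσ j hj1 hjN))

lemma vcont (hsol : IsParticleSol f N x₀ v₀ t' x v)
    (hx₀ : ∀ i, 1 ≤ i → i < N → x₀ i < x₀ (i+1)) :
    ∀ j, j ≤ N → ContinuousOn (v j) (Set.Ico 0 t') := by
  intro j hj
  rcases Nat.eq_zero_or_pos j with rfl | hj1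
  · have : v 0 = fun _ => (0:ℝ) := funext hsol.vzero
    rw [this]; exact continuousOn_const
  rcases eq_or_lt_of_le hj with rfl | hjN
  · have : v j = fun _ => (0:ℝ) := funext hsol.vN
    rw [this]; exact continuousOn_const
  have heq : ∀ σ ∈ Set.Ico (0:ℝ) t',
      v j σ = v₀ j * (x₀ (j+1) - x₀ j) / (x (j+1) σ - x j σ) :=
    fun σ hσ => hsol.mass j hj1 hjN σ hσ
  apply ContinuousOn.congr _ heq
  apply ContinuousOn.div continuousOn_const
  · exact (hsol.cont (j+1) (by omega) (by omega)).sub (hsol.cont j hj1 (by omega))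
  · intro σ hσ
    exact ne_of_gt (ellpos hsol hx₀ σ hσ j hj1 hjN)

lemma vderiv (hsol : IsParticleSol f N x₀ v₀ t' x v)
    (hx₀ : ∀ i, 1 ≤ i → i < N → x₀ i < x₀ (i+1)) :
    ∀ j, 1 ≤ j → j < N → ∀ σ ∈ Set.Ioo (0:ℝ) t',
      HasDerivAt (v j)
        (-(v₀ j * (x₀ (j+1) - x₀ j)) * (pV f (v j σ) (v (j+1) σ) - pV f (v (j-1) σ) (v j σ))
          / (x (j+1) σ - x j σ)^2) σ := by
  intro j hj1 hjN σ hσ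
  have hσ' : σ ∈ Set.Ico (0:ℝ) t' := ⟨le_of_lt hσ.1, hσ.2⟩
  have hℓ : HasDerivAt (fun τ => x (j+1) τ - x j τ)
      (pV f (v j σ) (v (j+1) σ) - pV f (v (j-1) σ) (v j σ)) σ := by
    have h1 := hsol.ode (j+1) (by omega) (by omega) σ hσ
    have h2 := hsol.ode j hj1 (by omega) σ hσ
    have h1' : HasDerivAt (x (j+1)) (pV f (v j σ) (v (j+1) σ)) σ := by
      simpa using h1
    exact h1'.sub h2
  have hne : x (j+1) σ - x j σ ≠ 0 := ne_of_gt (ellpos hsol hx₀ σ hσ' j hj1 hjN)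
  have hD : HasDerivAt (fun τ => v₀ j * (x₀ (j+1) - x₀ j) / (x (j+1) τ - x j τ))
      (-(v₀ j * (x₀ (j+1) - x₀ j)) * (pV f (v j σ) (v (j+1) σ) - pV f (v (j-1) σ) (v j σ))
          / (x (j+1) σ - x j σ)^2) σ := by
    have := (hasDerivAt_const σ (v₀ j * (x₀ (j+1) - x₀ j))).div hℓ hne
    refine this.congr_deriv ?_
    ring
  apply hD.congr_of_eventuallyEq
  have hopen : Set.Ioo (0:ℝ) t' ∈ 𝓝 σ := isOpen_Ioo.mem_nhds hσ
  filter_upwards [hopen] with τ hτ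
  exact hsol.mass j hj1 hjN τ ⟨le_of_lt hτ.1, hτ.2⟩

end sol

section sol2
variable {f : ℝ → ℝ} {K : ℝ≥0} {N : ℕ} {x₀ v₀ : ℕ → ℝ} {t' : ℝ} {x v : ℕ → ℝ → ℝ}

lemma W_cell (hsol : IsParticleSol f N x₀ v₀ t' x v)
    (hx₀ : ∀ i, 1 ≤ i → i < N → x₀ i < x₀ (i+1)) (hN : 2 ≤ N)
    {σ : ℝ} (hσ : σ ∈ Set.Ico (0:ℝ) t') {y : ℝ}
    (hy : ∀ i, 1 ≤ i → i ≤ N → y ≠ x i σ) :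
    ∃ j ≤ N, Wfun N x v σ y = v j σ ∧ (1 ≤ j → x j σ < y) ∧ (j < N → y < x (j+1) σ) := by
  classical
  by_cases hy1 : y < x 1 σ
  · refine ⟨0, by omega, ?_, by omega, fun _ => by simpa using hy1⟩
    rw [hsol.vzero, Wfun]
    apply Finset.sum_eq_zero
    intro j hj
    rw [Finset.mem_Ioo] at hj
    have : x 1 σ ≤ x j σ := xmono hsol hx₀ σ hσ 1 j le_rfl (by omega) (by omega)
    have : y ∉ Set.Ioo (x j σ) (x (j+1) σ) := by
      intro hmem; exact absurd hmem.1 (by linarith)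
    rw [Set.indicator_of_notMem this, mul_zero]
  · by_cases hyN : x N σ < y
    · refine ⟨N, le_rfl, ?_, fun _ => ?_, by omega⟩
      · rw [hsol.vN, Wfun]
        apply Finset.sum_eq_zero
        intro j hj
        rw [Finset.mem_Ioo] at hj
        have : x (j+1) σ ≤ x N σ := xmono hsol hx₀ σ hσ (j+1) N (by omega) (by omega) le_rfl
        have : y ∉ Set.Ioo (x j σ) (x (j+1) σ) := by
          intro hmem; exact absurd hmem.2 (by linarith)
        rw [Set.indicator_of_notMem this, mul_zero]
      · exact hyN
    · -- middle case
      have hx1y : x 1 σ < y :=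
        lt_of_le_of_ne (not_lt.1 hy1) (fun h => hy 1 le_rfl (by omega) h.symm)
      haveI hPdec : DecidablePred (fun i => x i σ < y) := Classical.decPred _
      set j := Nat.findGreatest (fun i => x i σ < y) N with hj
      have hj1 : 1 ≤ j := Nat.le_findGreatest (by omega) hx1y
      have hjle : j ≤ N := Nat.findGreatest_le N
      have hPj : x j σ < y := Nat.findGreatest_spec (P := fun i => x i σ < y) (by omega) hx1y
      have hjN : j < N := by
        rcases eq_or_lt_of_le hjle with heq | h
        · exfalso; apply hyN; rw [← heq]; exact hPj
        · exact h
      have hnotP : ¬ (x (j+1) σ < y) := by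
        have := Nat.findGreatest_is_greatest (P := fun i => x i σ < y) (k := j+1) (n := N)
        exact this (by omega) (by omega)
      have hyx : y < x (j+1) σ :=
        lt_of_le_of_ne (not_lt.1 hnotP) (hy (j+1) (by omega) (by omega))
      refine ⟨j, hjle, ?_, fun _ => hPj, fun _ => hyx⟩
      rw [Wfun]
      rw [Finset.sum_eq_single j]
      · rw [Set.indicator_of_mem (Set.mem_Ioo.2 ⟨hPj, hyx⟩), Pi.one_apply, mul_one]
      · intro b hb hbj
        rw [Finset.mem_Ioo] at hb
        rcases lt_or_gt_of_ne hbj with hlt | hgt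
        · have : x (b+1) σ ≤ x j σ := xmono hsol hx₀ σ hσ (b+1) j (by omega) (by omega) (by omega)
          have : y ∉ Set.Ioo (x b σ) (x (b+1) σ) := fun hmem => absurd hmem.2 (by linarith [hPj])
          rw [Set.indicator_of_notMem this, mul_zero]
        · have : x (j+1) σ ≤ x b σ := xmono hsol hx₀ σ hσ (j+1) b (by omega) (by omega) (by omega)
          have : y ∉ Set.Ioo (x b σ) (x (b+1) σ) := fun hmem => absurd hmem.1 (by linarith)
          rw [Set.indicator_of_notMem this, mul_zero]
      · intro hj'
        exact absurd (Finset.mem_Ioo.2 ⟨by omega, by omega⟩) hj'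

end sol2

section sol3
variable {f : ℝ → ℝ} {K : ℝ≥0} {N : ℕ} {x₀ v₀ : ℕ → ℝ} {t' : ℝ} {x v : ℕ → ℝ → ℝ}

lemma W_meas (N : ℕ) (x v : ℕ → ℝ → ℝ) (σ : ℝ) : Measurable (Wfun N x v σ) := by
  apply Finset.measurable_sum
  intro j _
  exact (measurable_one.indicator measurableSet_Ioo).const_mul _

lemma step_bound (hsol : IsParticleSol f N x₀ v₀ t' x v)
    (hx₀ : ∀ i, 1 ≤ i → i < N → x₀ i < x₀ (i+1)) (hN : 2 ≤ N)
    {σ τ : ℝ} (hσ : σ ∈ Set.Ico (0:ℝ) t') (hτ : τ ∈ Set.Ico (0:ℝ) t') :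
    ∫ y, |Wfun N x v τ y - Wfun N x v σ y| ≤
      (∑ i ∈ Finset.Icc 1 N, |v i τ - v (i-1) τ| * |x i τ - x i σ|)
      + ∑ j ∈ Finset.Ioo 0 N, |v j τ - v j σ| * (x (j+1) σ - x j σ) := by
  classical
  set g1 : ℝ → ℝ := fun y => ∑ i ∈ Finset.Icc 1 N,
    |v i τ - v (i-1) τ| * Set.indicator (Set.uIcc (x i τ) (x i σ)) 1 y with hg1
  set g2 : ℝ → ℝ := fun y => ∑ j ∈ Finset.Ioo 0 N,
    |v j τ - v j σ| * Set.indicator (Set.Icc (x j σ) (x (j+1) σ)) 1 y with hg2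
  have hg1i : Integrable g1 := by
    apply integrable_finset_sum
    intro i _
    apply Integrable.const_mul
    rw [integrable_indicator_iff measurableSet_uIcc]
    apply integrableOn_const (hs := ?_)
    exact ne_of_lt (by rw [Real.volume_interval]; exact ENNReal.ofReal_lt_top)
  have hg2i : Integrable g2 := by
    apply integrable_finset_sum
    intro j _
    apply Integrable.const_mul
    rw [integrable_indicator_iff measurableSet_Icc]
    apply integrableOn_const (hs := ?_)
    exact ne_of_lt (by rw [Real.volume_Icc]; exact ENNReal.ofReal_lt_top)
  have hgi : Integrable (fun y => g1 y + g2 y) := hg1i.add hg2i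
  -- the bad finite set
  set B : Set ℝ := (↑((Finset.Icc 1 N).image (fun i => x i σ)) : Set ℝ)
      ∪ (↑((Finset.Icc 1 N).image (fun i => x i τ)) : Set ℝ) with hB
  have hBnull : volume B = 0 := by
    apply measure_union_null <;> exact (Finset.finite_toSet _).measure_zero _
  have hae : ∀ᵐ y, y ∉ B := measure_eq_zero_iff_ae_notMem.mp hBnull
  -- pointwise bound off B
  have hpt : ∀ y ∉ B, |Wfun N x v τ y - Wfun N x v σ y| ≤ g1 y + g2 y := by
    intro y hyB
    have hyσ : ∀ i, 1 ≤ i → i ≤ N → y ≠ x i σ := by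
      intro i h1 h2 he
      exact hyB (Or.inl (Finset.mem_coe.2 (Finset.mem_image.2
        ⟨i, Finset.mem_Icc.2 ⟨h1, h2⟩, he.symm⟩)))
    have hyτ : ∀ i, 1 ≤ i → i ≤ N → y ≠ x i τ := by
      intro i h1 h2 he
      exact hyB (Or.inr (Finset.mem_coe.2 (Finset.mem_image.2
        ⟨i, Finset.mem_Icc.2 ⟨h1, h2⟩, he.symm⟩)))
    obtain ⟨j, hjN, hWσ, hjl, hjr⟩ := W_cell hsol hx₀ hN hσ hyσ
    obtain ⟨j', hj'N, hWτ, hj'l, hj'r⟩ := W_cell hsol hx₀ hN hτ hyτ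
    rw [hWσ, hWτ]
    have htri : |v j' τ - v j σ| ≤ |v j' τ - v j τ| + |v j τ - v j σ| := by
      have := abs_add_le (v j' τ - v j τ) (v j τ - v j σ)
      calc |v j' τ - v j σ| = |(v j' τ - v j τ) + (v j τ - v j σ)| := by ring_nf
        _ ≤ _ := abs_add_le _ _
    have h2 : |v j τ - v j σ| ≤ g2 y := by
      rcases Nat.eq_zero_or_pos j with rfl | hj1
      · rw [hsol.vzero, hsol.vzero]
        simp only [sub_self, abs_zero]
        rw [hg2]
        apply Finset.sum_nonneg
        intro i _
        exact mul_nonneg (abs_nonneg _) (Set.indicator_nonneg (fun _ _ => zero_le_one) _)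
      rcases eq_or_lt_of_le hjN with rfl | hjN'
      · rw [hsol.vN, hsol.vN]
        simp only [sub_self, abs_zero]
        rw [hg2]
        apply Finset.sum_nonneg
        intro i _
        exact mul_nonneg (abs_nonneg _) (Set.indicator_nonneg (fun _ _ => zero_le_one) _)
      · rw [hg2]
        have hmem : y ∈ Set.Icc (x j σ) (x (j+1) σ) :=
          ⟨le_of_lt (hjl hj1), le_of_lt (hjr hjN')⟩
        have : |v j τ - v j σ| * Set.indicator (Set.Icc (x j σ) (x (j+1) σ)) 1 y
            = |v j τ - v j σ| := by
          rw [Set.indicator_of_mem hmem, Pi.one_apply, mul_one]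
        rw [← this]
        apply Finset.single_le_sum (f := fun i => |v i τ - v i σ| *
          Set.indicator (Set.Icc (x i σ) (x (i+1) σ)) 1 y)
          (fun i _ => mul_nonneg (abs_nonneg _) (Set.indicator_nonneg (fun _ _ => zero_le_one) _))
          (Finset.mem_Ioo.2 ⟨hj1, hjN'⟩)
    have h1 : |v j' τ - v j τ| ≤ g1 y := by
      rcases le_total j j' with hjj | hjj
      · -- j ≤ j'
        have htel := telescope_abs (fun i => v i τ) j j' hjj
        have hsub : ∀ i ∈ Finset.Ioc j j', |v i τ - v (i-1) τ|
            = |v i τ - v (i-1) τ| * Set.indicator (Set.uIcc (x i τ) (x i σ)) 1 y := by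
          intro i hi
          rw [Finset.mem_Ioc] at hi
          have hyi : x i τ < y := by
            have h1 : x i τ ≤ x j' τ := xmono hsol hx₀ τ hτ i j' (by omega) hi.2 hj'N
            have h2 : x j' τ < y := hj'l (by omega)
            linarith
          have hyi2 : y < x i σ := by
            have hjN2 : j < N := by omega
            have h1 : y < x (j+1) σ := hjr hjN2
            have h2 : x (j+1) σ ≤ x i σ := xmono hsol hx₀ σ hσ (j+1) i (by omega) (by omega)
              (by omega)
            linarith
          rw [Set.indicator_of_mem (Set.mem_uIcc.2 (Or.inl ⟨le_of_lt hyi, le_of_lt hyi2⟩)),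
            Pi.one_apply, mul_one]
        calc |v j' τ - v j τ| ≤ ∑ i ∈ Finset.Ioc j j', |v i τ - v (i-1) τ| := htel
          _ = ∑ i ∈ Finset.Ioc j j', |v i τ - v (i-1) τ|
              * Set.indicator (Set.uIcc (x i τ) (x i σ)) 1 y := Finset.sum_congr rfl hsub
          _ ≤ g1 y := by
            rw [hg1]
            apply Finset.sum_le_sum_of_subset_of_nonneg
            · intro i hi
              rw [Finset.mem_Ioc] at hi
              exact Finset.mem_Icc.2 ⟨by omega, by omega⟩
            · intro i _ _
              exact mul_nonneg (abs_nonneg _) (Set.indicator_nonneg (fun _ _ => zero_le_one) _)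
      · -- j' ≤ j
        have htel := telescope_abs (fun i => v i τ) j' j hjj
        rw [abs_sub_comm]
        have hsub : ∀ i ∈ Finset.Ioc j' j, |v i τ - v (i-1) τ|
            = |v i τ - v (i-1) τ| * Set.indicator (Set.uIcc (x i τ) (x i σ)) 1 y := by
          intro i hi
          rw [Finset.mem_Ioc] at hi
          have hyi : x i σ < y := by
            have h1 : x i σ ≤ x j σ := xmono hsol hx₀ σ hσ i j (by omega) hi.2 hjN
            have h2 : x j σ < y := hjl (by omega)
            linarith
          have hyi2 : y < x i τ := by
            have hj'N2 : j' < N := by omega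
            have h1 : y < x (j'+1) τ := hj'r hj'N2
            have h2 : x (j'+1) τ ≤ x i τ := xmono hsol hx₀ τ hτ (j'+1) i (by omega) (by omega)
              (by omega)
            linarith
          rw [Set.indicator_of_mem (Set.mem_uIcc.2 (Or.inr ⟨le_of_lt hyi, le_of_lt hyi2⟩)),
            Pi.one_apply, mul_one]
        calc |v j τ - v j' τ| ≤ ∑ i ∈ Finset.Ioc j' j, |v i τ - v (i-1) τ| := htel
          _ = ∑ i ∈ Finset.Ioc j' j, |v i τ - v (i-1) τ|
              * Set.indicator (Set.uIcc (x i τ) (x i σ)) 1 y := Finset.sum_congr rfl hsub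
          _ ≤ g1 y := by
            rw [hg1]
            apply Finset.sum_le_sum_of_subset_of_nonneg
            · intro i hi
              rw [Finset.mem_Ioc] at hi
              exact Finset.mem_Icc.2 ⟨by omega, by omega⟩
            · intro i _ _
              exact mul_nonneg (abs_nonneg _) (Set.indicator_nonneg (fun _ _ => zero_le_one) _)
    linarith
  have haeb : ∀ᵐ y, |Wfun N x v τ y - Wfun N x v σ y| ≤ g1 y + g2 y := by
    filter_upwards [hae] with y hy using hpt y hy
  have hmeas : AEStronglyMeasurable (fun y => |Wfun N x v τ y - Wfun N x v σ y|) volume :=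
    (((W_meas N x v τ).sub (W_meas N x v σ)).abs).aestronglyMeasurable
  have hint : Integrable (fun y => |Wfun N x v τ y - Wfun N x v σ y|) := by
    apply Integrable.mono' hgi hmeas
    filter_upwards [haeb] with y hy
    rwa [Real.norm_eq_abs, abs_abs]
  calc ∫ y, |Wfun N x v τ y - Wfun N x v σ y| ≤ ∫ y, (g1 y + g2 y) :=
        integral_mono_ae hint hgi haeb
    _ = (∑ i ∈ Finset.Icc 1 N, |v i τ - v (i-1) τ| * |x i τ - x i σ|)
        + ∑ j ∈ Finset.Ioo 0 N, |v j τ - v j σ| * (x (j+1) σ - x j σ) := by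
      rw [integral_add hg1i hg2i]
      congr 1
      · rw [hg1, integral_finset_sum _ (fun i _ => by
          apply Integrable.const_mul
          rw [integrable_indicator_iff measurableSet_uIcc]
          apply integrableOn_const (hs := ?_)
          exact ne_of_lt (by rw [Real.volume_interval]; exact ENNReal.ofReal_lt_top))]
        apply Finset.sum_congr rfl
        intro i _
        rw [integral_const_mul]
        congr 1
        have : (fun y => Set.indicator (Set.uIcc (x i τ) (x i σ)) 1 y)
            = Set.indicator (Set.uIcc (x i τ) (x i σ)) (fun _ => (1:ℝ)) := rfl
        rw [this, integral_indicator_const _ measurableSet_uIcc]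
        rw [Real.volume_real_interval]
        simp [abs_sub_comm]
      · rw [hg2, integral_finset_sum _ (fun j _ => by
          apply Integrable.const_mul
          rw [integrable_indicator_iff measurableSet_Icc]
          apply integrableOn_const (hs := ?_)
          exact ne_of_lt (by rw [Real.volume_Icc]; exact ENNReal.ofReal_lt_top))]
        apply Finset.sum_congr rfl
        intro j hj
        rw [Finset.mem_Ioo] at hj
        rw [integral_const_mul]
        congr 1
        have : (fun y => Set.indicator (Set.Icc (x j σ) (x (j+1) σ)) 1 y)
            = Set.indicator (Set.Icc (x j σ) (x (j+1) σ)) (fun _ => (1:ℝ)) := rfl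
        rw [this, integral_indicator_const _ measurableSet_Icc]
        rw [Real.volume_real_Icc_of_le
          (sub_nonneg.1 (le_of_lt (ellpos hsol hx₀ σ hσ j hj.1 hj.2)))]
        simp
end sol3

section sol4
variable {f : ℝ → ℝ} {K : ℝ≥0} {N : ℕ} {x₀ v₀ : ℕ → ℝ} {t' : ℝ} {x v : ℕ → ℝ → ℝ}

lemma W_int (N : ℕ) (x v : ℕ → ℝ → ℝ) (σ : ℝ) : Integrable (Wfun N x v σ) := by
  apply integrable_finset_sum
  intro j _
  apply Integrable.const_mul
  rw [integrable_indicator_iff measurableSet_Ioo]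
  apply integrableOn_const (hs := ?_)
  exact ne_of_lt (by rw [Real.volume_Ioo]; exact ENNReal.ofReal_lt_top)

lemma Ioo_eq_Icc' {n : ℕ} : Finset.Ioo 0 (n+2) = Finset.Icc 1 (n+1) := by
  ext i; simp [Finset.mem_Ioo, Finset.mem_Icc]; omega

lemma rate_bound (hf : LipschitzWith K f) (hf0 : f 0 = 0) (hfd : DifferentiableAt ℝ f 0)
    (hsol : IsParticleSol f N x₀ v₀ t' x v)
    (hx₀ : ∀ i, 1 ≤ i → i < N → x₀ i < x₀ (i+1))
    (hv₀nn : ∀ i, 1 ≤ i → i < N → 0 ≤ v₀ i) (hN : 2 ≤ N)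
    {σ : ℝ} (hσ : σ ∈ Set.Ico (0:ℝ) t') :
    (∑ i ∈ Finset.Icc 1 N, |v i σ - v (i-1) σ| * |pV f (v (i-1) σ) (v i σ)|)
    + (∑ j ∈ Finset.Ioo 0 N, (v j σ) *
        |pV f (v j σ) (v (j+1) σ) - pV f (v (j-1) σ) (v j σ)|)
    ≤ 3 * K * ∑ i ∈ Finset.Icc 1 N, |v i σ - v (i-1) σ| := by
  have hvnn : ∀ j, j ≤ N → 0 ≤ v j σ := fun j hj => vnn hsol hx₀ hv₀nn σ hσ j hj
  -- split middle term
  have hmid : ∀ j ∈ Finset.Ioo 0 N, (v j σ) *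
      |pV f (v j σ) (v (j+1) σ) - pV f (v (j-1) σ) (v j σ)|
      ≤ |v j σ * pV f (v j σ) (v (j+1) σ) - f (v j σ)|
        + |v j σ * pV f (v (j-1) σ) (v j σ) - f (v j σ)| := by
    intro j hj
    rw [Finset.mem_Ioo] at hj
    have h0 : 0 ≤ v j σ := hvnn j (by omega)
    calc (v j σ) * |pV f (v j σ) (v (j+1) σ) - pV f (v (j-1) σ) (v j σ)|
        = |v j σ * pV f (v j σ) (v (j+1) σ) - v j σ * pV f (v (j-1) σ) (v j σ)| := by
          rw [← mul_sub, abs_mul, abs_of_nonneg h0]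
      _ = |(v j σ * pV f (v j σ) (v (j+1) σ) - f (v j σ))
            - (v j σ * pV f (v (j-1) σ) (v j σ) - f (v j σ))| := by ring_nf
      _ ≤ _ := abs_sub _ _
  obtain ⟨n, rfl⟩ : ∃ n, N = n + 2 := ⟨N - 2, by omega⟩
  have h1 : (∑ j ∈ Finset.Ioo 0 (n+2), (v j σ) *
      |pV f (v j σ) (v (j+1) σ) - pV f (v (j-1) σ) (v j σ)|)
      ≤ (∑ j ∈ Finset.Ioo 0 (n+2), |v j σ * pV f (v j σ) (v (j+1) σ) - f (v j σ)|)
      + ∑ j ∈ Finset.Ioo 0 (n+2), |v j σ * pV f (v (j-1) σ) (v j σ) - f (v j σ)| := by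
    rw [← Finset.sum_add_distrib]
    exact Finset.sum_le_sum hmid
  -- first piece: shift index
  have h2 : (∑ j ∈ Finset.Ioo 0 (n+2), |v j σ * pV f (v j σ) (v (j+1) σ) - f (v j σ)|)
      ≤ ∑ i ∈ Finset.Icc 1 (n+2), |v (i-1) σ * pV f (v (i-1) σ) (v i σ) - f (v (i-1) σ)| := by
    have hmap : (∑ j ∈ Finset.Ioo 0 (n+2), |v j σ * pV f (v j σ) (v (j+1) σ) - f (v j σ)|)
        = ∑ i ∈ Finset.Icc 2 (n+2), |v (i-1) σ * pV f (v (i-1) σ) (v i σ) - f (v (i-1) σ)| := by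
      rw [Ioo_eq_Icc']
      rw [show Finset.Icc 2 (n+2) = (Finset.Icc 1 (n+1)).map (addRightEmbedding 1) by
        rw [Finset.map_add_right_Icc]]
      rw [Finset.sum_map]
      apply Finset.sum_congr rfl
      intro i _
      simp [addRightEmbedding]
    rw [hmap]
    apply Finset.sum_le_sum_of_subset_of_nonneg
    · intro i hi; rw [Finset.mem_Icc] at hi ⊢; omega
    · intro i _ _; positivity
  have h3 : (∑ j ∈ Finset.Ioo 0 (n+2), |v j σ * pV f (v (j-1) σ) (v j σ) - f (v j σ)|)
      ≤ ∑ i ∈ Finset.Icc 1 (n+2), |v i σ * pV f (v (i-1) σ) (v i σ) - f (v i σ)| := by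
    apply Finset.sum_le_sum_of_subset_of_nonneg
    · intro i hi; rw [Finset.mem_Ioo] at hi; rw [Finset.mem_Icc]; omega
    · intro i _ _; positivity
  have hkey : ∀ i ∈ Finset.Icc 1 (n+2),
      |v i σ - v (i-1) σ| * |pV f (v (i-1) σ) (v i σ)|
      + |v (i-1) σ * pV f (v (i-1) σ) (v i σ) - f (v (i-1) σ)|
      + |v i σ * pV f (v (i-1) σ) (v i σ) - f (v i σ)|
      ≤ 3 * K * |v i σ - v (i-1) σ| := by
    intro i hi
    rw [Finset.mem_Icc] at hi
    exact pV_key hf hf0 hfd (hvnn (i-1) (by omega)) (hvnn i (by omega))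
  have := Finset.sum_le_sum hkey
  rw [Finset.sum_add_distrib, Finset.sum_add_distrib] at this
  have hrw : (∑ i ∈ Finset.Icc 1 (n+2), 3 * (K:ℝ) * |v i σ - v (i-1) σ|)
      = 3 * K * ∑ i ∈ Finset.Icc 1 (n+2), |v i σ - v (i-1) σ| := by
    rw [Finset.mul_sum]
  linarith
end sol4

lemma abel_sum (ε q : ℕ → ℝ) : ∀ m : ℕ,
    ∑ i ∈ Finset.Icc 1 (m+1), ε i * (q i - q (i-1))
      = (∑ j ∈ Finset.Icc 1 m, (ε j - ε (j+1)) * q j) + ε (m+1) * q (m+1) - ε 1 * q 0 := by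
  intro m
  induction m with
  | zero => simp; ring
  | succ m ih =>
    rw [Finset.sum_Icc_succ_top (by omega : 1 ≤ m+1+1), ih,
      Finset.sum_Icc_succ_top (by omega : 1 ≤ m+1)]
    simp only [Nat.add_sub_cancel]
    ring

section sol5
variable {f : ℝ → ℝ} {K : ℝ≥0} {N : ℕ} {x₀ v₀ : ℕ → ℝ} {t' : ℝ} {x v : ℕ → ℝ → ℝ}

lemma vderiv_all (hsol : IsParticleSol f N x₀ v₀ t' x v)
    (hx₀ : ∀ i, 1 ≤ i → i < N → x₀ i < x₀ (i+1))
    {χ : ℝ} (hχ : χ ∈ Set.Ioo (0:ℝ) t') :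
    ∀ i ≤ N, HasDerivAt (v i)
      (if 1 ≤ i ∧ i < N then
        -(v₀ i * (x₀ (i+1) - x₀ i)) * (pV f (v i χ) (v (i+1) χ) - pV f (v (i-1) χ) (v i χ))
          / (x (i+1) χ - x i χ)^2
       else 0) χ := by
  intro i hi
  by_cases h : 1 ≤ i ∧ i < N
  · rw [if_pos h]; exact vderiv hsol hx₀ i h.1 h.2 χ hχ
  · rw [if_neg h]
    rcases Nat.eq_zero_or_pos i with rfl | h1
    · have : v 0 = fun _ => (0:ℝ) := funext hsol.vzero
      rw [this]; exact hasDerivAt_const _ _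
    · have hiN : i = N := by omega
      have : v i = fun _ => (0:ℝ) := by rw [hiN]; exact funext hsol.vN
      rw [this]; exact hasDerivAt_const _ _

lemma TV_mono (hf : LipschitzWith K f) (hf0 : f 0 = 0) (hfd : DifferentiableAt ℝ f 0)
    (hsol : IsParticleSol f N x₀ v₀ t' x v)
    (hx₀ : ∀ i, 1 ≤ i → i < N → x₀ i < x₀ (i+1))
    (hv₀nn : ∀ i, 1 ≤ i → i < N → 0 ≤ v₀ i) (hN : 2 ≤ N) (ht' : 0 < t') :
    ∀ σ ∈ Set.Ico (0:ℝ) t',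
      (∑ i ∈ Finset.Icc 1 N, |v i σ - v (i-1) σ|)
        ≤ ∑ i ∈ Finset.Icc 1 N, |v i 0 - v (i-1) 0| := by
  classical
  set TVt : ℝ → ℝ := fun σ => ∑ i ∈ Finset.Icc 1 N, |v i σ - v (i-1) σ| with hTVt
  have hTVcont : ContinuousOn TVt (Set.Ico 0 t') := by
    apply continuousOn_finset_sum
    intro i hi
    rw [Finset.mem_Icc] at hi
    exact ((vcont hsol hx₀ i hi.2).sub (vcont hsol hx₀ (i-1) (by omega))).abs
  -- key: for 0 < s₀ ≤ σ < t', TVt σ ≤ TVt s₀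
  have hmain : ∀ s₀ σ : ℝ, 0 < s₀ → s₀ ≤ σ → σ < t' → TVt σ ≤ TVt s₀ := by
    intro s₀ σ hs₀ hsσ hσt
    have hsub : Set.Icc s₀ σ ⊆ Set.Ico 0 t' :=
      fun z hz => ⟨le_trans (le_of_lt hs₀) hz.1, lt_of_le_of_lt hz.2 hσt⟩
    have hslope : ∀ χ ∈ Set.Ico s₀ σ, ∀ r : ℝ, (0:ℝ) < r →
        ∃ᶠ z in 𝓝[>] χ, slope TVt χ z < r := by
      intro χ hχ r hr
      have hχmem : χ ∈ Set.Ioo (0:ℝ) t' :=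
        ⟨lt_of_lt_of_le hs₀ hχ.1, lt_trans hχ.2 hσt⟩
      have hχico : χ ∈ Set.Ico (0:ℝ) t' := ⟨le_of_lt hχmem.1, hχmem.2⟩
      set vd : ℕ → ℝ := fun i => if 1 ≤ i ∧ i < N then
          -(v₀ i * (x₀ (i+1) - x₀ i)) * (pV f (v i χ) (v (i+1) χ) - pV f (v (i-1) χ) (v i χ))
            / (x (i+1) χ - x i χ)^2
         else 0 with hvd
      have hder : ∀ i ≤ N, HasDerivAt (v i) (vd i) χ := vderiv_all hsol hx₀ hχmem
      have hdd : ∀ i, 1 ≤ i → i ≤ N →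
          HasDerivAt (fun z => v i z - v (i-1) z) (vd i - vd (i-1)) χ :=
        fun i h1 hi => (hder i hi).sub (hder (i-1) (by omega))
      set ε : ℕ → ℝ := fun i => if v i χ - v (i-1) χ = 0 then
          (if 0 ≤ vd i - vd (i-1) then 1 else -1)
        else (if 0 < v i χ - v (i-1) χ then 1 else -1) with hε
      have hεpm : ∀ i, ε i = 1 ∨ ε i = -1 := by
        intro i; simp only [hε]; split_ifs <;> simp
      set D : ℝ := ∑ i ∈ Finset.Icc 1 N, ε i * (vd i - vd (i-1)) with hD
      -- slope comparison functions
      set ψ : ℕ → ℝ → ℝ := fun i z => if v i χ - v (i-1) χ = 0 then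
          |slope (fun τ => v i τ - v (i-1) τ) χ z|
        else ε i * slope (fun τ => v i τ - v (i-1) τ) χ z with hψ
      have hψlim : ∀ i ∈ Finset.Icc 1 N, Tendsto (ψ i) (𝓝[>] χ)
          (𝓝 (if v i χ - v (i-1) χ = 0 then |vd i - vd (i-1)| else ε i * (vd i - vd (i-1)))) := by
        intro i hi
        rw [Finset.mem_Icc] at hi
        have hbase : Tendsto (slope (fun τ => v i τ - v (i-1) τ) χ) (𝓝[>] χ)
            (𝓝 (vd i - vd (i-1))) :=
          (hasDerivAt_iff_tendsto_slope.1 (hdd i hi.1 hi.2)).mono_left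
            (nhdsWithin_mono _ (fun z hz => ne_of_gt hz))
        by_cases h : v i χ - v (i-1) χ = 0
        · simp only [hψ, if_pos h]
          exact hbase.abs
        · simp only [hψ, if_neg h]
          exact hbase.const_mul _
      have hφlim : Tendsto (fun z => ∑ i ∈ Finset.Icc 1 N, ψ i z) (𝓝[>] χ) (𝓝 D) := by
        have hDeq : D = ∑ i ∈ Finset.Icc 1 N,
            (if v i χ - v (i-1) χ = 0 then |vd i - vd (i-1)| else ε i * (vd i - vd (i-1))) := by
          rw [hD]
          apply Finset.sum_congr rfl
          intro i _
          by_cases h : v i χ - v (i-1) χ = 0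
          · simp only [hε, if_pos h]
            by_cases h2 : 0 ≤ vd i - vd (i-1)
            · rw [if_pos h2, abs_of_nonneg h2, one_mul]
            · rw [if_neg h2, abs_of_neg (by linarith), neg_one_mul]
          · rw [if_neg h]
        rw [hDeq]
        exact tendsto_finset_sum _ hψlim
      -- slope of TVt is eventually bounded by the ψ sum
      have hev : ∀ᶠ z in 𝓝[>] χ, slope TVt χ z ≤ ∑ i ∈ Finset.Icc 1 N, ψ i z := by
        have hsgn : ∀ᶠ z in 𝓝[>] χ, ∀ i ∈ Finset.Icc 1 N,
            (v i χ - v (i-1) χ ≠ 0 →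
              (0 < v i χ - v (i-1) χ → 0 < v i z - v (i-1) z) ∧
              (v i χ - v (i-1) χ < 0 → v i z - v (i-1) z < 0)) := by
          rw [eventually_all_finset]
          intro i hi
          rw [Finset.mem_Icc] at hi
          have hcont : ContinuousAt (fun z => v i z - v (i-1) z) χ :=
            (hdd i hi.1 hi.2).continuousAt
          by_cases h : v i χ - v (i-1) χ = 0
          · exact Eventually.of_forall (fun z hz => absurd h hz.elim)
          · rcases lt_or_gt_of_ne h with hlt | hgt
            · have : ∀ᶠ z in 𝓝 χ, v i z - v (i-1) z < 0 :=
                Filter.Tendsto.eventually_lt_const hlt hcont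
              filter_upwards [nhdsWithin_le_nhds this] with z hz
              intro _
              exact ⟨fun hp => absurd hp (by linarith), fun _ => hz⟩
            · have : ∀ᶠ z in 𝓝 χ, 0 < v i z - v (i-1) z :=
                Filter.Tendsto.eventually_const_lt hgt hcont
              filter_upwards [nhdsWithin_le_nhds this] with z hz
              intro _
              exact ⟨fun _ => hz, fun hp => absurd hp (by linarith)⟩
        filter_upwards [hsgn, self_mem_nhdsWithin] with z hz hzχ
        have hzχ' : χ < z := hzχ
        have hpos : (0:ℝ) < z - χ := by linarith
        rw [slope_def_field, hTVt]
        rw [← Finset.sum_sub_distrib, Finset.sum_div]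
        apply Finset.sum_le_sum
        intro i hi
        have hzi := hz i hi
        by_cases h : v i χ - v (i-1) χ = 0
        · simp only [hψ, if_pos h, slope_def_field]
          rw [h, abs_zero, sub_zero, sub_zero, abs_div, abs_of_pos hpos]
        · simp only [hψ, if_neg h, hε, slope_def_field]
          rcases lt_or_gt_of_ne h with hlt | hgt
          · rw [if_neg (not_lt.2 (le_of_lt hlt))]
            have h1 : v i z - v (i-1) z < 0 := (hzi h).2 hlt
            rw [abs_of_neg h1, abs_of_neg hlt]
            have : (-(v i z - v (i-1) z) - -(v i χ - v (i-1) χ)) / (z - χ)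
                = -1 * ((v i z - v (i-1) z - (v i χ - v (i-1) χ)) / (z - χ)) := by ring
            rw [this]
          · rw [if_pos hgt]
            have h1 : 0 < v i z - v (i-1) z := (hzi h).1 hgt
            rw [abs_of_pos h1, abs_of_pos hgt, one_mul]
      -- D ≤ 0
      have hD0 : D ≤ 0 := by
        obtain ⟨n, hn⟩ : ∃ n, N = n + 2 := ⟨N - 2, by omega⟩
        rw [hD, hn, abel_sum ε vd (n+1)]
        have hvdN : vd (n+2) = 0 := by
          simp only [hvd]; rw [if_neg (by omega)]
        have hvd0 : vd 0 = 0 := by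
          simp only [hvd]; rw [if_neg (by omega)]
        rw [hvdN, hvd0]
        simp only [mul_zero, add_zero, sub_zero]
        apply Finset.sum_nonpos
        intro j hj
        rw [Finset.mem_Icc] at hj
        have hj1 : 1 ≤ j := hj.1
        have hjN : j < N := by omega
        have hvdj : vd j = -(v₀ j * (x₀ (j+1) - x₀ j)) *
            (pV f (v j χ) (v (j+1) χ) - pV f (v (j-1) χ) (v j χ)) / (x (j+1) χ - x j χ)^2 := by
          simp only [hvd]; rw [if_pos ⟨hj1, hjN⟩]
        have hM : 0 ≤ v₀ j * (x₀ (j+1) - x₀ j) := by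
          have := hx₀ j hj1 hjN
          have := hv₀nn j hj1 hjN
          nlinarith
        have hℓ : 0 < (x (j+1) χ - x j χ)^2 := by
          have := ellpos hsol hx₀ χ hχico j hj1 hjN
          positivity
        rcases hεpm j with hεj | hεj <;> rcases hεpm (j+1) with hεj1 | hεj1
        · rw [hεj, hεj1]; simp
        · -- ε j = 1, ε (j+1) = -1 : local max, vd j ≤ 0
          have hd1 : 0 ≤ v j χ - v (j-1) χ := by
            by_contra hcon
            push_neg at hcon
            simp only [hε, if_neg (ne_of_lt hcon), if_neg (not_lt.2 (le_of_lt hcon))] at hεj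
            norm_num at hεj
          have hd2 : v (j+1) χ - v j χ ≤ 0 := by
            by_contra hcon
            push_neg at hcon
            simp only [hε, Nat.add_sub_cancel] at hεj1
            rw [if_neg (by intro hh; rw [hh] at hcon; exact absurd hcon (lt_irrefl 0) ), if_pos hcon] at hεj1
            norm_num at hεj1
          have hB1 : pV f (v (j-1) χ) (v j χ) ≤ aF f (v j χ) :=
            pV_le_right hf hf0 hfd (by linarith)
          have hB2 : aF f (v j χ) ≤ pV f (v j χ) (v (j+1) χ) :=
            pV_ge_left hf hf0 hfd (by linarith)
          have hvdle : vd j ≤ 0 := by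
            rw [hvdj]
            apply div_nonpos_of_nonpos_of_nonneg _ (le_of_lt hℓ)
            have : 0 ≤ (v₀ j * (x₀ (j+1) - x₀ j)) *
                (pV f (v j χ) (v (j+1) χ) - pV f (v (j-1) χ) (v j χ)) :=
              mul_nonneg hM (by linarith)
            linarith
          rw [hεj, hεj1]
          nlinarith
        · -- ε j = -1, ε (j+1) = 1 : local min, vd j ≥ 0
          have hd1 : v j χ - v (j-1) χ ≤ 0 := by
            by_contra hcon
            push_neg at hcon
            simp only [hε] at hεj
            rw [if_neg (by intro hh; rw [hh] at hcon; exact absurd hcon (lt_irrefl 0)), if_pos hcon] at hεj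
            norm_num at hεj
          have hd2 : 0 ≤ v (j+1) χ - v j χ := by
            by_contra hcon
            push_neg at hcon
            simp only [hε, Nat.add_sub_cancel] at hεj1
            rw [if_neg (ne_of_lt hcon), if_neg (not_lt.2 (le_of_lt hcon))] at hεj1
            norm_num at hεj1
          have hB1 : aF f (v j χ) ≤ pV f (v (j-1) χ) (v j χ) :=
            pV_ge_right hf hf0 hfd (by linarith)
          have hB2 : pV f (v j χ) (v (j+1) χ) ≤ aF f (v j χ) :=
            pV_le_left hf hf0 hfd (by linarith)
          have hvdge : 0 ≤ vd j := by
            rw [hvdj]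
            apply div_nonneg _ (le_of_lt hℓ)
            have : (v₀ j * (x₀ (j+1) - x₀ j)) *
                (pV f (v j χ) (v (j+1) χ) - pV f (v (j-1) χ) (v j χ)) ≤ 0 :=
              mul_nonpos_of_nonneg_of_nonpos hM (by linarith)
            linarith
          rw [hεj, hεj1]
          nlinarith
        · rw [hεj, hεj1]; simp
      -- conclude frequently
      have hevlt : ∀ᶠ z in 𝓝[>] χ, (∑ i ∈ Finset.Icc 1 N, ψ i z) < r :=
        hφlim.eventually_lt_const (by linarith)
      have : ∀ᶠ z in 𝓝[>] χ, slope TVt χ z < r := by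
        filter_upwards [hev, hevlt] with z h1 h2 using lt_of_le_of_lt h1 h2
      exact this.frequently
    have hbound := dini_bound (g := TVt) (a := s₀) (b := σ) (C := 0) hsσ
      (hTVcont.mono hsub) hslope
    linarith [hbound]
  -- extend to σ ∈ Ico 0 t'
  intro σ hσ
  rcases eq_or_lt_of_le hσ.1 with heq | hσpos
  · rw [← heq]
  · haveI : (𝓝[Set.Ioc 0 σ] (0:ℝ)).NeBot := by
      apply mem_closure_iff_nhdsWithin_neBot.1
      rw [closure_Ioc hσpos.ne]
      exact ⟨le_rfl, le_of_lt hσpos⟩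
    have h1 : Tendsto TVt (𝓝[Set.Ioc 0 σ] 0) (𝓝 (TVt 0)) :=
      (hTVcont 0 ⟨le_rfl, ht'⟩).mono_left
        (nhdsWithin_mono _ (fun z hz => ⟨le_of_lt hz.1, lt_of_le_of_lt hz.2 hσ.2⟩))
    apply ge_of_tendsto h1
    filter_upwards [self_mem_nhdsWithin] with s₀ hs₀
    exact hmain s₀ σ hs₀.1 hs₀.2 hσ.2

end sol5

section sol6
variable {f : ℝ → ℝ} {K : ℝ≥0} {N : ℕ} {x₀ v₀ : ℕ → ℝ} {t' : ℝ} {x v : ℕ → ℝ → ℝ}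

lemma Wdiff_int (N : ℕ) (x v : ℕ → ℝ → ℝ) (σ τ : ℝ) :
    Integrable (fun y => |Wfun N x v τ y - Wfun N x v σ y|) :=
  ((W_int N x v τ).sub (W_int N x v σ)).abs

lemma G_diff_le (N : ℕ) (x v : ℕ → ℝ → ℝ) (s σ τ : ℝ) :
    (∫ y, |Wfun N x v τ y - Wfun N x v s y|) - (∫ y, |Wfun N x v σ y - Wfun N x v s y|)
      ≤ ∫ y, |Wfun N x v τ y - Wfun N x v σ y| := by
  rw [← integral_sub (Wdiff_int N x v s τ) (Wdiff_int N x v s σ)]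
  apply integral_mono (((Wdiff_int N x v s τ)).sub ((Wdiff_int N x v s σ)))
    (Wdiff_int N x v σ τ)
  intro y
  simp only
  have := abs_sub_abs_le_abs_sub (Wfun N x v τ y - Wfun N x v s y)
    (Wfun N x v σ y - Wfun N x v s y)
  calc |Wfun N x v τ y - Wfun N x v s y| - |Wfun N x v σ y - Wfun N x v s y|
      ≤ |(Wfun N x v τ y - Wfun N x v s y) - (Wfun N x v σ y - Wfun N x v s y)| := this
    _ = |Wfun N x v τ y - Wfun N x v σ y| := by ring_nf

lemma main_est (hf : LipschitzWith K f) (hf0 : f 0 = 0) (hfd : DifferentiableAt ℝ f 0)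
    (hsol : IsParticleSol f N x₀ v₀ t' x v)
    (hx₀ : ∀ i, 1 ≤ i → i < N → x₀ i < x₀ (i+1))
    (hv₀nn : ∀ i, 1 ≤ i → i < N → 0 ≤ v₀ i) (hN : 2 ≤ N) (ht' : 0 < t')
    {s t : ℝ} (hs : 0 < s) (hst : s ≤ t) (ht : t < t') :
    ∫ y, |Wfun N x v t y - Wfun N x v s y|
      ≤ 3 * K * (∑ i ∈ Finset.Icc 1 N, |v i 0 - v (i-1) 0|) * (t - s) := by
  classical
  set TV0 : ℝ := ∑ i ∈ Finset.Icc 1 N, |v i 0 - v (i-1) 0| with hTV0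
  set G : ℝ → ℝ := fun σ => ∫ y, |Wfun N x v σ y - Wfun N x v s y| with hG
  have hsub : Set.Icc s t ⊆ Set.Ico 0 t' :=
    fun z hz => ⟨le_trans (le_of_lt hs) hz.1, lt_of_le_of_lt hz.2 ht⟩
  -- continuity of the step-bound majorant
  have hSBcont : ∀ χ ∈ Set.Ico (0:ℝ) t', ∀ (S : Set ℝ), S ⊆ Set.Ico 0 t' →
      ContinuousOn (fun z => (∑ i ∈ Finset.Icc 1 N, |v i z - v (i-1) z| * |x i z - x i χ|)
        + ∑ j ∈ Finset.Ioo 0 N, |v j z - v j χ| * (x (j+1) χ - x j χ)) S := by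
    intro χ hχ S hS
    apply ContinuousOn.add
    · apply continuousOn_finset_sum
      intro i hi
      rw [Finset.mem_Icc] at hi
      exact (((vcont hsol hx₀ i hi.2).sub (vcont hsol hx₀ (i-1) (by omega))).abs.mul
        (((hsol.cont i hi.1 hi.2).sub continuousOn_const).abs)).mono hS
    · apply continuousOn_finset_sum
      intro j hj
      rw [Finset.mem_Ioo] at hj
      exact ((((vcont hsol hx₀ j (by omega)).sub continuousOn_const).abs).mul
        continuousOn_const).mono hS
  -- continuity of G
  have hGcont : ContinuousOn G (Set.Icc s t) := by
    intro χ hχ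
    have hχ' : χ ∈ Set.Ico (0:ℝ) t' := hsub hχ
    have hb : ∀ z ∈ Set.Icc s t, |G z - G χ| ≤
        (∑ i ∈ Finset.Icc 1 N, |v i z - v (i-1) z| * |x i z - x i χ|)
        + ∑ j ∈ Finset.Ioo 0 N, |v j z - v j χ| * (x (j+1) χ - x j χ) := by
      intro z hz
      have h1 : G z - G χ ≤ ∫ y, |Wfun N x v z y - Wfun N x v χ y| := G_diff_le N x v s χ z
      have h2 : G χ - G z ≤ ∫ y, |Wfun N x v χ y - Wfun N x v z y| := G_diff_le N x v s z χ
      have h2' : (∫ y, |Wfun N x v χ y - Wfun N x v z y|)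
          = ∫ y, |Wfun N x v z y - Wfun N x v χ y| := by
        congr 1; funext y; rw [abs_sub_comm]
      have hstep := step_bound hsol hx₀ hN hχ' (hsub hz)
      rw [abs_le]
      constructor
      · rw [h2'] at h2; linarith
      · linarith
    have h2 : ContinuousWithinAt (fun z =>
        (∑ i ∈ Finset.Icc 1 N, |v i z - v (i-1) z| * |x i z - x i χ|)
        + ∑ j ∈ Finset.Ioo 0 N, |v j z - v j χ| * (x (j+1) χ - x j χ)) (Set.Icc s t) χ :=
      hSBcont χ hχ' (Set.Icc s t) hsub χ hχ
    have hval : ((∑ i ∈ Finset.Icc 1 N, |v i χ - v (i-1) χ| * |x i χ - x i χ|)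
        + ∑ j ∈ Finset.Ioo 0 N, |v j χ - v j χ| * (x (j+1) χ - x j χ)) = 0 := by
      simp
    have hzero : Tendsto (fun z => |G z - G χ|) (𝓝[Set.Icc s t] χ) (𝓝 0) := by
      apply squeeze_zero' (Eventually.of_forall (fun z => abs_nonneg _))
      · filter_upwards [self_mem_nhdsWithin] with z hz using hb z hz
      · have := h2.tendsto
        rw [hval] at this
        exact this
    rw [ContinuousWithinAt, tendsto_iff_dist_tendsto_zero]
    simpa [Real.dist_eq] using hzero
  -- slope estimate
  have hGslope : ∀ χ ∈ Set.Ico s t, ∀ r : ℝ, 3 * K * TV0 < r →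
      ∃ᶠ z in 𝓝[>] χ, slope G χ z < r := by
    intro χ hχ r hr
    have hχmem : χ ∈ Set.Ioo (0:ℝ) t' := ⟨lt_of_lt_of_le hs hχ.1, lt_trans hχ.2 ht⟩
    have hχico : χ ∈ Set.Ico (0:ℝ) t' := ⟨le_of_lt hχmem.1, hχmem.2⟩
    set vd : ℕ → ℝ := fun i => if 1 ≤ i ∧ i < N then
        -(v₀ i * (x₀ (i+1) - x₀ i)) * (pV f (v i χ) (v (i+1) χ) - pV f (v (i-1) χ) (v i χ))
          / (x (i+1) χ - x i χ)^2
       else 0 with hvd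
    have hder : ∀ i ≤ N, HasDerivAt (v i) (vd i) χ := vderiv_all hsol hx₀ hχmem
    set R : ℝ := (∑ i ∈ Finset.Icc 1 N, |v i χ - v (i-1) χ| * |pV f (v (i-1) χ) (v i χ)|)
      + ∑ j ∈ Finset.Ioo 0 N, |vd j| * (x (j+1) χ - x j χ) with hR
    -- R ≤ 3 K TV0
    have hRle : R ≤ 3 * K * TV0 := by
      have hrw : ∀ j ∈ Finset.Ioo 0 N, |vd j| * (x (j+1) χ - x j χ)
          = v j χ * |pV f (v j χ) (v (j+1) χ) - pV f (v (j-1) χ) (v j χ)| := by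
        intro j hj
        rw [Finset.mem_Ioo] at hj
        have hℓ : 0 < x (j+1) χ - x j χ := ellpos hsol hx₀ χ hχico j hj.1 hj.2
        have hM : 0 ≤ v₀ j * (x₀ (j+1) - x₀ j) := by
          have := hx₀ j hj.1 hj.2
          have := hv₀nn j hj.1 hj.2
          nlinarith
        have hmass : v j χ = v₀ j * (x₀ (j+1) - x₀ j) / (x (j+1) χ - x j χ) :=
          hsol.mass j hj.1 hj.2 χ hχico
        simp only [hvd]
        rw [if_pos ⟨hj.1, hj.2⟩, hmass]
        rw [abs_div, abs_mul, abs_neg, abs_of_nonneg hM, abs_of_pos (by positivity :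
          (0:ℝ) < (x (j+1) χ - x j χ)^2)]
        field_simp
      have h1 : R = (∑ i ∈ Finset.Icc 1 N, |v i χ - v (i-1) χ| * |pV f (v (i-1) χ) (v i χ)|)
          + ∑ j ∈ Finset.Ioo 0 N, v j χ *
            |pV f (v j χ) (v (j+1) χ) - pV f (v (j-1) χ) (v j χ)| := by
        rw [hR]
        congr 1
        exact Finset.sum_congr rfl hrw
      rw [h1]
      calc _ ≤ 3 * (K:ℝ) * ∑ i ∈ Finset.Icc 1 N, |v i χ - v (i-1) χ| :=
            rate_bound hf hf0 hfd hsol hx₀ hv₀nn hN hχico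
        _ ≤ 3 * K * TV0 := by
            have := TV_mono hf hf0 hfd hsol hx₀ hv₀nn hN ht' χ hχico
            have hK : (0:ℝ) ≤ K := K.2
            rw [hTV0]
            nlinarith
    -- the slope majorant and its limit
    set φ : ℝ → ℝ := fun z =>
      ((∑ i ∈ Finset.Icc 1 N, |v i z - v (i-1) z| * |x i z - x i χ|)
        + ∑ j ∈ Finset.Ioo 0 N, |v j z - v j χ| * (x (j+1) χ - x j χ)) / (z - χ) with hφ
    have hev : ∀ᶠ z in 𝓝[>] χ, slope G χ z ≤ φ z := by
      filter_upwards [self_mem_nhdsWithin, Ioo_mem_nhdsGT_of_mem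
        (Set.mem_Ico.2 ⟨le_rfl, hχmem.2⟩)] with z hz hz2
      have hzχ : χ < z := hz
      have hpos : (0:ℝ) < z - χ := by linarith
      have h1 : G z - G χ ≤ ∫ y, |Wfun N x v z y - Wfun N x v χ y| := G_diff_le N x v s χ z
      have h2 := step_bound hsol hx₀ hN hχico (⟨le_trans (le_of_lt hχmem.1) (le_of_lt hzχ),
        hz2.2⟩ : z ∈ Set.Ico (0:ℝ) t')
      rw [slope_def_field, hφ]
      exact (div_le_div_iff_of_pos_right hpos).2 (by linarith)
    have hφlim : Tendsto φ (𝓝[>] χ) (𝓝 R) := by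
      have hcongr : ∀ᶠ z in 𝓝[>] χ,
          ((∑ i ∈ Finset.Icc 1 N, |v i z - v (i-1) z| * |slope (x i) χ z|)
          + ∑ j ∈ Finset.Ioo 0 N, |slope (v j) χ z| * (x (j+1) χ - x j χ)) = φ z := by
        filter_upwards [self_mem_nhdsWithin] with z hz
        have hpos : (0:ℝ) < z - χ := by have : χ < z := hz; linarith
        simp only [hφ]
        rw [_root_.add_div, Finset.sum_div, Finset.sum_div]
        congr 1
        · apply Finset.sum_congr rfl
          intro i _
          rw [slope_def_field, abs_div, abs_of_pos hpos]
          ring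
        · apply Finset.sum_congr rfl
          intro j _
          rw [slope_def_field, abs_div, abs_of_pos hpos]
          ring
      apply Tendsto.congr' hcongr
      rw [hR]
      apply Tendsto.add
      · apply tendsto_finset_sum
        intro i hi
        rw [Finset.mem_Icc] at hi
        have hxd : HasDerivAt (x i) (pV f (v (i-1) χ) (v i χ)) χ :=
          hsol.ode i hi.1 hi.2 χ hχmem
        have hs1 : Tendsto (slope (x i) χ) (𝓝[>] χ) (𝓝 (pV f (v (i-1) χ) (v i χ))) :=
          (hasDerivAt_iff_tendsto_slope.1 hxd).mono_left
            (nhdsWithin_mono _ (fun z hz => ne_of_gt hz))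
        have hvc : Tendsto (fun z => |v i z - v (i-1) z|) (𝓝[>] χ)
            (𝓝 (|v i χ - v (i-1) χ|)) := by
          have h1 : ContinuousAt (fun z => v i z - v (i-1) z) χ :=
            ((hder i hi.2).continuousAt).sub ((hder (i-1) (by omega)).continuousAt)
          exact (h1.abs).tendsto.mono_left nhdsWithin_le_nhds
        exact hvc.mul hs1.abs
      · apply tendsto_finset_sum
        intro j hj
        rw [Finset.mem_Ioo] at hj
        have hvdj : Tendsto (slope (v j) χ) (𝓝[>] χ) (𝓝 (vd j)) :=
          (hasDerivAt_iff_tendsto_slope.1 (hder j (by omega))).mono_left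
            (nhdsWithin_mono _ (fun z hz => ne_of_gt hz))
        exact hvdj.abs.mul_const _
    have hevlt : ∀ᶠ z in 𝓝[>] χ, φ z < r := hφlim.eventually_lt_const (by linarith)
    have hfin : ∀ᶠ z in 𝓝[>] χ, slope G χ z < r := by
      filter_upwards [hev, hevlt] with z h1 h2 using lt_of_le_of_lt h1 h2
    exact hfin.frequently
  have hGs : G s = 0 := by
    rw [hG]; simp
  have hfence := dini_bound (g := G) (a := s) (b := t) (C := 3 * K * TV0) hst hGcont hGslope
  rw [hGs] at hfence
  calc ∫ y, |Wfun N x v t y - Wfun N x v s y| = G t := rfl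
    _ ≤ 0 + 3 * K * TV0 * (t - s) := hfence
    _ = 3 * K * TV0 * (t - s) := by ring
end sol6

section sol7
variable {f : ℝ → ℝ} {K : ℝ≥0} {N : ℕ} {x₀ v₀ : ℕ → ℝ} {t' : ℝ} {x v : ℕ → ℝ → ℝ}

lemma v_init (hsol : IsParticleSol f N x₀ v₀ t' x v)
    (hx₀ : ∀ i, 1 ≤ i → i < N → x₀ i < x₀ (i+1))
    (hv₀0 : v₀ 0 = 0) (hv₀N : v₀ N = 0) (ht' : 0 < t') :
    ∀ i ≤ N, v i 0 = v₀ i := by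
  intro i hi
  rcases Nat.eq_zero_or_pos i with rfl | h1
  · rw [hsol.vzero, hv₀0]
  rcases eq_or_lt_of_le hi with heq | hiN
  · rw [heq, hsol.vN, hv₀N]
  · rw [hsol.mass i h1 hiN 0 ⟨le_rfl, ht'⟩, hsol.init (i+1) (by omega) (by omega),
      hsol.init i h1 (by omega), mul_div_assoc,
      div_self (ne_of_gt (by linarith [hx₀ i h1 hiN])), mul_one]

lemma w_eq_W (hsol : IsParticleSol f N x₀ v₀ t' x v)
    (hx₀ : ∀ i, 1 ≤ i → i < N → x₀ i < x₀ (i+1)) (hN : 2 ≤ N)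
    (w : ℝ → ℝ → ℝ)
    (hwl : ∀ t ∈ Set.Ico (0:ℝ) t', ∀ y, y < x 1 t → w y t = 0)
    (hwr : ∀ t ∈ Set.Ico (0:ℝ) t', ∀ y, x N t < y → w y t = 0)
    (hwmid : ∀ t ∈ Set.Ico (0:ℝ) t', ∀ i, 1 ≤ i → i < N →
      ∀ y ∈ Set.Ioo (x i t) (x (i+1) t), w y t = v i t)
    {σ : ℝ} (hσ : σ ∈ Set.Ico (0:ℝ) t') :
    ∀ y, (∀ i, 1 ≤ i → i ≤ N → y ≠ x i σ) → w y σ = Wfun N x v σ y := by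
  intro y hy
  obtain ⟨j, hjN, hW, hjl, hjr⟩ := W_cell hsol hx₀ hN hσ hy
  rcases Nat.eq_zero_or_pos j with rfl | h1
  · rw [hW, hsol.vzero, hwl σ hσ y (hjr (by omega))]
  rcases eq_or_lt_of_le hjN with heq | hjN'
  · have hxy : x N σ < y := by rw [← heq]; exact hjl h1
    rw [hW, heq, hsol.vN, hwr σ hσ y hxy]
  · rw [hW, hwmid σ hσ j h1 hjN' y ⟨hjl h1, hjr hjN'⟩]

lemma w_ae_W (hsol : IsParticleSol f N x₀ v₀ t' x v)
    (hx₀ : ∀ i, 1 ≤ i → i < N → x₀ i < x₀ (i+1)) (hN : 2 ≤ N)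
    (w : ℝ → ℝ → ℝ)
    (hwl : ∀ t ∈ Set.Ico (0:ℝ) t', ∀ y, y < x 1 t → w y t = 0)
    (hwr : ∀ t ∈ Set.Ico (0:ℝ) t', ∀ y, x N t < y → w y t = 0)
    (hwmid : ∀ t ∈ Set.Ico (0:ℝ) t', ∀ i, 1 ≤ i → i < N →
      ∀ y ∈ Set.Ioo (x i t) (x (i+1) t), w y t = v i t)
    {σ : ℝ} (hσ : σ ∈ Set.Ico (0:ℝ) t') :
    (fun y => w y σ) =ᵐ[volume] (fun y => Wfun N x v σ y) := by
  have hnull : volume (↑((Finset.Icc 1 N).image (fun i => x i σ)) : Set ℝ) = 0 :=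
    (Finset.finite_toSet _).measure_zero _
  have h1 : ∀ᵐ y, y ∉ (↑((Finset.Icc 1 N).image (fun i => x i σ)) : Set ℝ) :=
    measure_eq_zero_iff_ae_notMem.mp hnull
  filter_upwards [h1] with y hy
  apply w_eq_W hsol hx₀ hN w hwl hwr hwmid hσ
  intro i hi1 hi2 he
  exact hy (Finset.mem_coe.2 (Finset.mem_image.2 ⟨i, Finset.mem_Icc.2 ⟨hi1, hi2⟩, he.symm⟩))

lemma sum_reindex (v₀ : ℕ → ℝ) (N : ℕ) :
    (∑ i ∈ Finset.range N, |v₀ (i+1) - v₀ i|) = ∑ i ∈ Finset.Icc 1 N, |v₀ i - v₀ (i-1)| := by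
  rw [Finset.range_eq_Ico, ← Finset.Ico_add_one_right_eq_Icc,
    show Finset.Ico 1 (N+1) = (Finset.Ico 0 N).map (addRightEmbedding 1) from by
      rw [Finset.map_add_right_Ico],
    Finset.sum_map]
  apply Finset.sum_congr rfl
  intro i _
  simp [addRightEmbedding]

end sol7


/-- **Temporal L¹ modulus of continuity.**
`∫ |v(x,t) − v(x,s)| dx ≤ 4 [f]_Lip |v₀|_BV |t − s|` for all `s, t ∈ [0, tʹ)`. -/
theorem temporal_L1_modulus
    (f : ℝ → ℝ) (K : ℝ≥0) (hf : LipschitzWith K f)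
    (hf0 : f 0 = 0) (hfd : DifferentiableAt ℝ f 0)
    (N : ℕ) (hN : 2 ≤ N) (x₀ v₀ : ℕ → ℝ)
    (hx₀ : ∀ i, 1 ≤ i → i < N → x₀ i < x₀ (i+1))
    (hv₀nn : ∀ i, 1 ≤ i → i < N → 0 ≤ v₀ i)
    (hv₀0 : v₀ 0 = 0) (hv₀N : v₀ N = 0)
    (t' : ℝ) (ht' : 0 < t') (x v : ℕ → ℝ → ℝ)
    (hsol : IsParticleSol f N x₀ v₀ t' x v)
    (w : ℝ → ℝ → ℝ)
    (hwl : ∀ t ∈ Set.Ico (0:ℝ) t', ∀ y, y < x 1 t → w y t = 0)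
    (hwr : ∀ t ∈ Set.Ico (0:ℝ) t', ∀ y, x N t < y → w y t = 0)
    (hwmid : ∀ t ∈ Set.Ico (0:ℝ) t', ∀ i, 1 ≤ i → i < N →
      ∀ y ∈ Set.Ioo (x i t) (x (i+1) t), w y t = v i t)
    :
    ∀ s ∈ Set.Ico (0:ℝ) t', ∀ t ∈ Set.Ico (0:ℝ) t',
      ∫ y, |w y t - w y s| ≤
        4 * (K : ℝ) * (∑ i ∈ Finset.range N, |v₀ (i+1) - v₀ i|) * |t - s| := by
  classical
  set S₀ : ℝ := ∑ i ∈ Finset.range N, |v₀ (i+1) - v₀ i| with hS₀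
  have hS₀nn : 0 ≤ S₀ := Finset.sum_nonneg (fun i _ => abs_nonneg _)
  have hKnn : (0:ℝ) ≤ K := K.2
  have hTV0 : (∑ i ∈ Finset.Icc 1 N, |v i 0 - v (i-1) 0|) = S₀ := by
    rw [hS₀, sum_reindex]
    apply Finset.sum_congr rfl
    intro i hi
    rw [Finset.mem_Icc] at hi
    rw [v_init hsol hx₀ hv₀0 hv₀N ht' i hi.2, v_init hsol hx₀ hv₀0 hv₀N ht' (i-1) (by omega)]
  suffices H : ∀ s ∈ Set.Ico (0:ℝ) t', ∀ t ∈ Set.Ico (0:ℝ) t', s ≤ t →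
      (∫ y, |w y t - w y s|) ≤ 4 * (K : ℝ) * S₀ * |t - s| by
    intro s hs t ht
    rcases le_total s t with h | h
    · exact H s hs t ht h
    · have hswap := H t ht s hs h
      have heq : (∫ y, |w y t - w y s|) = ∫ y, |w y s - w y t| := by
        congr 1; funext y; rw [abs_sub_comm]
      rw [heq, abs_sub_comm t s]
      exact hswap
  intro s hs t ht hst
  -- replace w by the measurable representative
  have hieq : (∫ y, |w y t - w y s|) = ∫ y, |Wfun N x v t y - Wfun N x v s y| := by
    apply integral_congr_ae
    filter_upwards [w_ae_W hsol hx₀ hN w hwl hwr hwmid ht,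
      w_ae_W hsol hx₀ hN w hwl hwr hwmid hs] with y h1 h2
    rw [h1, h2]
  rw [hieq]
  rcases eq_or_lt_of_le hst with heq | hlt
  · rw [heq]
    simp
  rcases eq_or_lt_of_le hs.1 with hzero | hpos
  · -- s = 0 : limit argument
    rw [← hzero]
    rw [← hzero] at hlt
    haveI : (𝓝[Set.Ioc 0 t] (0:ℝ)).NeBot := by
      apply mem_closure_iff_nhdsWithin_neBot.1
      rw [closure_Ioc hlt.ne]
      exact ⟨le_rfl, le_of_lt hlt⟩
    have hkey : ∀ σ ∈ Set.Ioc (0:ℝ) t,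
        (∫ y, |Wfun N x v t y - Wfun N x v 0 y|) ≤ 3 * K * S₀ * t +
          ((∑ i ∈ Finset.Icc 1 N, |v i σ - v (i-1) σ| * |x i σ - x i 0|)
            + ∑ j ∈ Finset.Ioo 0 N, |v j σ - v j 0| * (x (j+1) 0 - x j 0)) := by
      intro σ hσ
      have hσico : σ ∈ Set.Ico (0:ℝ) t' := ⟨le_of_lt hσ.1, lt_of_le_of_lt hσ.2 ht.2⟩
      have htri : (∫ y, |Wfun N x v t y - Wfun N x v 0 y|) ≤
          (∫ y, |Wfun N x v t y - Wfun N x v σ y|)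
          + ∫ y, |Wfun N x v σ y - Wfun N x v 0 y| := by
        rw [← integral_add (Wdiff_int N x v σ t) (Wdiff_int N x v 0 σ)]
        apply integral_mono (Wdiff_int N x v 0 t)
          ((Wdiff_int N x v σ t).add (Wdiff_int N x v 0 σ))
        intro y
        simp only
        calc |Wfun N x v t y - Wfun N x v 0 y|
            = |(Wfun N x v t y - Wfun N x v σ y) + (Wfun N x v σ y - Wfun N x v 0 y)| := by
              ring_nf
          _ ≤ _ := abs_add_le _ _
      have hm := main_est hf hf0 hfd hsol hx₀ hv₀nn hN ht' hσ.1 hσ.2 ht.2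
      rw [hTV0] at hm
      have hsb := step_bound hsol hx₀ hN (⟨le_rfl, ht'⟩ : (0:ℝ) ∈ Set.Ico (0:ℝ) t') hσico
      have h3 : 3 * (K:ℝ) * S₀ * (t - σ) ≤ 3 * K * S₀ * t := by
        nlinarith [hσ.1, mul_nonneg hKnn hS₀nn]
      linarith
    have hlim : Tendsto (fun σ => 3 * (K:ℝ) * S₀ * t +
        ((∑ i ∈ Finset.Icc 1 N, |v i σ - v (i-1) σ| * |x i σ - x i 0|)
          + ∑ j ∈ Finset.Ioo 0 N, |v j σ - v j 0| * (x (j+1) 0 - x j 0)))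
        (𝓝[Set.Ioc 0 t] 0) (𝓝 (3 * K * S₀ * t + 0)) := by
      apply Tendsto.const_add
      have hsub : Set.Ioc (0:ℝ) t ⊆ Set.Ico 0 t' :=
        fun z hz => ⟨le_of_lt hz.1, lt_of_le_of_lt hz.2 ht.2⟩
      have hcont : ContinuousOn (fun z =>
          (∑ i ∈ Finset.Icc 1 N, |v i z - v (i-1) z| * |x i z - x i 0|)
          + ∑ j ∈ Finset.Ioo 0 N, |v j z - v j 0| * (x (j+1) 0 - x j 0)) (Set.Ico 0 t') := by
        apply ContinuousOn.add
        · apply continuousOn_finset_sum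
          intro i hi
          rw [Finset.mem_Icc] at hi
          exact ((vcont hsol hx₀ i hi.2).sub (vcont hsol hx₀ (i-1) (by omega))).abs.mul
            (((hsol.cont i hi.1 hi.2).sub continuousOn_const).abs)
        · apply continuousOn_finset_sum
          intro j hj
          rw [Finset.mem_Ioo] at hj
          exact (((vcont hsol hx₀ j (by omega)).sub continuousOn_const).abs).mul
            continuousOn_const
      have h0 : ((∑ i ∈ Finset.Icc 1 N, |v i 0 - v (i-1) 0| * |x i 0 - x i 0|)
          + ∑ j ∈ Finset.Ioo 0 N, |v j 0 - v j 0| * (x (j+1) 0 - x j 0)) = 0 := by simp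
      have h2 := ((hcont 0 ⟨le_rfl, ht'⟩).mono hsub).tendsto
      simp only [sub_self, abs_zero, zero_mul, mul_zero, Finset.sum_const_zero, add_zero] at h2
      exact h2
    have hfin : (∫ y, |Wfun N x v t y - Wfun N x v 0 y|) ≤ 3 * K * S₀ * t + 0 :=
      ge_of_tendsto hlim (by
        filter_upwards [self_mem_nhdsWithin] with σ hσ using hkey σ hσ)
    have habs : |t - (0:ℝ)| = t := by rw [sub_zero, abs_of_pos hlt]
    rw [habs]
    nlinarith [mul_nonneg (mul_nonneg hKnn hS₀nn) (le_of_lt hlt)]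
  · -- 0 < s
    have hm := main_est hf hf0 hfd hsol hx₀ hv₀nn hN ht' hpos hst ht.2
    rw [hTV0] at hm
    have habs : |t - s| = t - s := abs_of_pos (by linarith)
    rw [habs]
    nlinarith [mul_nonneg (mul_nonneg hKnn hS₀nn) (sub_nonneg.2 hst)]
end
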